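/- arXiv:1910.12934 — 3 statements merged into one kernel-verified Lean document; each statement's English description precedes it below -/
import Mathlib

section
/- If W and W′ ∈ Matrix (Fin n) (Fin n) ℝ both satisfy the weak trapeze inequalities and the weak parallelogram inequalities and their tropical transfer matrices agree, T(W) = T(W′), then W = W′. -/
open Finset

/-- Truncated predecessor in `Fin n` (1-indexed entry `i-1`). -/
def fpred {n : ℕ} (j : Fin n) : Fin n :=
  ⟨j.val - 1, Nat.lt_of_le_of_lt (Nat.sub_le _ _) j.isLt⟩

/-- `ψ(W)_{i,j}` is the tropical weight of the uppermost path from source `i`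
to target `j` in the canonical planar network `G_n`. -/
def psi (n : ℕ) (W : Matrix (Fin n) (Fin n) ℝ) : Matrix (Fin n) (Fin n) ℝ :=
  fun i j => if i ≤ j then ∑ t ∈ Finset.Icc i j, W i t else ∑ t ∈ Finset.Icc j i, W t j

/-- The map `φ`, inverse of `ψ`. -/
def phi (n : ℕ) (A : Matrix (Fin n) (Fin n) ℝ) : Matrix (Fin n) (Fin n) ℝ :=
  fun i j =>
    if i = j then A i j
    else if i < j then A i j - A i (fpred j)
    else A i j - A (fpred i) j

/-- Weak trapeze inequalities. -/
def WeakTrapeze (n : ℕ) (W : Matrix (Fin n) (Fin n) ℝ) : Prop :=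
  ∀ i : Fin n, 0 < i.val →
    W i (fpred i) + W (fpred i) (fpred i) + W (fpred i) i ≤ W i i

/-- Strict trapeze inequalities. -/
def StrictTrapeze (n : ℕ) (W : Matrix (Fin n) (Fin n) ℝ) : Prop :=
  ∀ i : Fin n, 0 < i.val →
    W i (fpred i) + W (fpred i) (fpred i) + W (fpred i) i < W i i

/-- Weak parallelogram inequalities. -/
def WeakPara (n : ℕ) (W : Matrix (Fin n) (Fin n) ℝ) : Prop :=
  ∀ i j : Fin n, ∀ _h : j.val + 2 ≤ i.val,
    W i j ≤ W i ⟨j.val + 1, by have := i.isLt; omega⟩ ∧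
    W j i ≤ W ⟨j.val + 1, by have := i.isLt; omega⟩ i

/-- Strict parallelogram inequalities. -/
def StrictPara (n : ℕ) (W : Matrix (Fin n) (Fin n) ℝ) : Prop :=
  ∀ i j : Fin n, ∀ _h : j.val + 2 ≤ i.val,
    W i j < W i ⟨j.val + 1, by have := i.isLt; omega⟩ ∧
    W j i < W ⟨j.val + 1, by have := i.isLt; omega⟩ i

/-- Maximum, over the permutations of sign `ε`, of the tropical weight of the
permutation in the `k × k` matrix `B` (computed in `WithBot ℝ`, the maximum over
the empty set being `⊥ = -∞`). -/
def tropPermSup (k : ℕ) (ε : ℤˣ) (B : Matrix (Fin k) (Fin k) (WithBot ℝ)) : WithBot ℝ :=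
  (Finset.univ.filter fun σ : Equiv.Perm (Fin k) => Equiv.Perm.sign σ = ε).sup
    fun σ => ∑ i, B i (σ i)

/-- Tropical total nonnegativity of a matrix over `ℝ ∪ {-∞}`. -/
def IsTropTN (n : ℕ) (A : Matrix (Fin n) (Fin n) (WithBot ℝ)) : Prop :=
  ∀ (k : ℕ) (r c : Fin k → Fin n), StrictMono r → StrictMono c →
    tropPermSup k (-1) (A.submatrix r c) ≤ tropPermSup k 1 (A.submatrix r c)

/-- Tropical total positivity of a real matrix. -/
def IsTropTP (n : ℕ) (A : Matrix (Fin n) (Fin n) ℝ) : Prop :=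
  ∀ (k : ℕ), 2 ≤ k → ∀ (r c : Fin k → Fin n), StrictMono r → StrictMono c →
    tropPermSup k (-1) ((A.map ((↑) : ℝ → WithBot ℝ)).submatrix r c) <
      tropPermSup k 1 ((A.map ((↑) : ℝ → WithBot ℝ)).submatrix r c)

/-- Max-plus matrix product. -/
def tropMul {l m p : ℕ} (A : Matrix (Fin l) (Fin m) (WithBot ℝ))
    (B : Matrix (Fin m) (Fin p) (WithBot ℝ)) : Matrix (Fin l) (Fin p) (WithBot ℝ) :=
  fun i j => Finset.univ.sup fun k => A i k + B k j

/-- Tropical identity matrix. -/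
def tropId (n : ℕ) : Matrix (Fin n) (Fin n) (WithBot ℝ) :=
  fun i j => if i = j then 0 else ⊥

/-- Tropical elementary Jacobi matrix `x_i(s)` (0-indexed: `s` in position `(i, i+1)`). -/
def xUp (n : ℕ) (i : ℕ) (s : ℝ) : Matrix (Fin n) (Fin n) (WithBot ℝ) :=
  fun a b => if a = b then 0 else if a.val = i ∧ b.val = i + 1 then (s : WithBot ℝ) else ⊥

/-- Tropical elementary Jacobi matrix `x̄_i(s)` (0-indexed: `s` in position `(i+1, i)`). -/
def xLow (n : ℕ) (i : ℕ) (s : ℝ) : Matrix (Fin n) (Fin n) (WithBot ℝ) :=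
  fun a b => if a = b then 0 else if a.val = i + 1 ∧ b.val = i then (s : WithBot ℝ) else ⊥

/-- Tropical elementary Jacobi matrix `x∘_i(s)` (0-indexed diagonal matrix,
`s` in position `(i, i)`). -/
def xDiag (n : ℕ) (i : ℕ) (s : ℝ) : Matrix (Fin n) (Fin n) (WithBot ℝ) :=
  fun a b => if a = b then (if a.val = i then (s : WithBot ℝ) else 0) else ⊥

/-- Entry of `W` looked up with natural-number (0-based) indices. -/
def wnat (n : ℕ) (W : Matrix (Fin n) (Fin n) ℝ) (a b : ℕ) : ℝ :=
  if h : a < n ∧ b < n then W ⟨a, h.1⟩ ⟨b, h.2⟩ else 0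

/-- The left part `L(W)` of the canonical planar network:
`L(W) = ⊙_{k=1}^{n−1} ⊙_{t=1}^{k} x̄_{n−k+t−1}(W_{n−k+t, t})` (1-indexed). -/
def Lmat (n : ℕ) (W : Matrix (Fin n) (Fin n) ℝ) : Matrix (Fin n) (Fin n) (WithBot ℝ) :=
  ((List.range (n - 1)).flatMap fun k => (List.range (k + 1)).map fun t =>
      xLow n (n - k + t - 2) (wnat n W (n - k + t - 1) t)).foldl tropMul (tropId n)

/-- The diagonal part `D(W) = x∘_1(W_{1,1}) ⊙ ⋯ ⊙ x∘_n(W_{n,n})` (1-indexed). -/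
def Dmat (n : ℕ) (W : Matrix (Fin n) (Fin n) ℝ) : Matrix (Fin n) (Fin n) (WithBot ℝ) :=
  ((List.range n).map fun i => xDiag n i (wnat n W i i)).foldl tropMul (tropId n)

/-- The tropical transfer matrix of the canonical totally connected planar
network `G_n` with weight matrix `W`: `T(W) = L(W) ⊙ D(W) ⊙ (L(Wᵀ))ᵀ`. -/
def Tmat (n : ℕ) (W : Matrix (Fin n) (Fin n) ℝ) : Matrix (Fin n) (Fin n) (WithBot ℝ) :=
  tropMul (tropMul (Lmat n W) (Dmat n W)) (Matrix.transpose (Lmat n W.transpose))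

section Helpers
variable {n : ℕ}

lemma sup_add_distrib (s : Finset (Fin n)) (f : Fin n → WithBot ℝ) (c : WithBot ℝ) :
    s.sup f + c = s.sup (fun k => f k + c) := by
  rw [Finset.comp_sup_eq_sup_comp (fun x => x + c)
    (fun x y => Monotone.map_max add_left_mono) (WithBot.bot_add c)]
  rfl

lemma add_sup_distrib (s : Finset (Fin n)) (f : Fin n → WithBot ℝ) (c : WithBot ℝ) :
    c + s.sup f = s.sup (fun k => c + f k) := by
  rw [Finset.comp_sup_eq_sup_comp (fun x => c + x)
    (fun x y => Monotone.map_max add_right_mono) (WithBot.add_bot c)]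
  rfl

lemma tropMul_assoc {l m p q : ℕ} (A : Matrix (Fin l) (Fin m) (WithBot ℝ))
    (B : Matrix (Fin m) (Fin p) (WithBot ℝ)) (C : Matrix (Fin p) (Fin q) (WithBot ℝ)) :
    tropMul (tropMul A B) C = tropMul A (tropMul B C) := by
  funext i j
  show Finset.univ.sup (fun k => (Finset.univ.sup fun t => A i t + B t k) + C k j)
    = Finset.univ.sup (fun t => A i t + Finset.univ.sup (fun k => B t k + C k j))
  simp only [sup_add_distrib, add_sup_distrib]
  rw [Finset.sup_comm]
  simp [add_assoc]

lemma tropMul_id {l : ℕ} (A : Matrix (Fin l) (Fin n) (WithBot ℝ)) :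
    tropMul A (tropId n) = A := by
  funext i j
  show Finset.univ.sup (fun k => A i k + if k = j then 0 else ⊥) = A i j
  apply le_antisymm
  · apply Finset.sup_le
    intro k _
    by_cases h : k = j
    · subst h; simp
    · simp [h]
  · have := Finset.le_sup (f := fun k => A i k + if k = j then 0 else ⊥)
      (Finset.mem_univ j)
    simpa using this

lemma id_tropMul {l : ℕ} (A : Matrix (Fin n) (Fin l) (WithBot ℝ)) :
    tropMul (tropId n) A = A := by
  funext i j
  show Finset.univ.sup (fun k => (if i = k then 0 else ⊥) + A k j) = A i j
  apply le_antisymm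
  · apply Finset.sup_le
    intro k _
    by_cases h : i = k
    · subst h; simp
    · simp [h, WithBot.bot_add]
  · have := Finset.le_sup (f := fun k => (if i = k then 0 else ⊥) + A k j)
      (Finset.mem_univ i)
    simpa using this

/-- product of a list of square tropical matrices -/
def mprod (n : ℕ) (l : List (Matrix (Fin n) (Fin n) (WithBot ℝ))) :
    Matrix (Fin n) (Fin n) (WithBot ℝ) := l.foldl tropMul (tropId n)

lemma mprod_nil' : mprod n ([] : List (Matrix (Fin n) (Fin n) (WithBot ℝ))) = tropId n := rfl

lemma foldl_tropMul (l : List (Matrix (Fin n) (Fin n) (WithBot ℝ)))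
    (A : Matrix (Fin n) (Fin n) (WithBot ℝ)) :
    l.foldl tropMul A = tropMul A (mprod n l) := by
  induction l generalizing A with
  | nil => rw [List.foldl_nil, mprod_nil', tropMul_id]
  | cons h t ih =>
      have hr : mprod n (h :: t) = tropMul h (mprod n t) := by
        show (h :: t).foldl tropMul (tropId n) = _
        rw [List.foldl_cons, ih (tropMul (tropId n) h), id_tropMul]
      rw [List.foldl_cons, ih (tropMul A h), hr, tropMul_assoc]

lemma mprod_append (l1 l2 : List (Matrix (Fin n) (Fin n) (WithBot ℝ))) :
    mprod n (l1 ++ l2) = tropMul (mprod n l1) (mprod n l2) := by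
  simp only [mprod, List.foldl_append]
  rw [foldl_tropMul]
  rfl

lemma mprod_nil2 : mprod n [] = tropId n := rfl

lemma mprod_single (A : Matrix (Fin n) (Fin n) (WithBot ℝ)) : mprod n [A] = A := by
  simp [mprod, id_tropMul]

lemma sup_eq_single (g : Fin n → WithBot ℝ) (k0 : Fin n)
    (h : ∀ k, k ≠ k0 → g k = ⊥) : Finset.univ.sup g = g k0 := by
  apply le_antisymm
  · apply Finset.sup_le
    intro k _
    by_cases hk : k = k0
    · subst hk; exact le_rfl
    · simp [h k hk]
  · exact Finset.le_sup (Finset.mem_univ k0)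

lemma sup_eq_pair (g : Fin n → WithBot ℝ) (k0 k1 : Fin n)
    (h : ∀ k, k ≠ k0 → k ≠ k1 → g k = ⊥) : Finset.univ.sup g = max (g k0) (g k1) := by
  apply le_antisymm
  · apply Finset.sup_le
    intro k _
    by_cases hk : k = k0
    · subst hk; exact le_max_left _ _
    by_cases hk1 : k = k1
    · subst hk1; exact le_max_right _ _
    · simp [h k hk hk1]
  · exact max_le (Finset.le_sup (Finset.mem_univ k0)) (Finset.le_sup (Finset.mem_univ k1))

end Helpers

section Dmat
variable {n : ℕ} (W : Matrix (Fin n) (Fin n) ℝ)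

lemma Dpart_eq (m : ℕ) :
    mprod n ((List.range m).map fun i => xDiag n i (wnat n W i i)) =
      fun i j => if i = j then (if i.val < m then ((wnat n W i.val i.val : ℝ) : WithBot ℝ) else 0)
        else ⊥ := by
  induction m with
  | zero => funext i j; simp [mprod_nil', tropId]
  | succ m ih =>
      rw [List.range_succ, List.map_append, mprod_append, ih, List.map_singleton, mprod_single]
      funext i j
      show Finset.univ.sup _ = _
      rw [sup_eq_single _ i]
      · by_cases hij : i = j
        · subst hij
          show (if i = i then (if (i:ℕ) < m then ((wnat n W i i : ℝ) : WithBot ℝ) else 0) else ⊥)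
              + (if i = i then (if (i:ℕ) = m then ((wnat n W m m : ℝ) : WithBot ℝ) else 0) else ⊥)
              = if i = i then (if (i:ℕ) < m + 1 then ((wnat n W i i : ℝ) : WithBot ℝ) else 0) else ⊥
          rw [if_pos rfl, if_pos rfl, if_pos rfl]
          rcases lt_trichotomy (i : ℕ) m with h | h | h
          · rw [if_pos h, if_neg (show ¬ (i:ℕ) = m by omega),
              if_pos (show (i:ℕ) < m + 1 by omega), add_zero]
          · rw [if_neg (show ¬ (i:ℕ) < m by omega), if_pos h,
              if_pos (show (i:ℕ) < m + 1 by omega), zero_add, h]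
          · rw [if_neg (show ¬ (i:ℕ) < m by omega), if_neg (show ¬ (i:ℕ) = m by omega),
              if_neg (show ¬ (i:ℕ) < m + 1 by omega), add_zero]
        · show (if i = i then (if (i:ℕ) < m then ((wnat n W i i : ℝ) : WithBot ℝ) else 0) else ⊥)
              + xDiag n m (wnat n W m m) i j
              = if i = j then (if (i:ℕ) < m + 1 then ((wnat n W i i : ℝ) : WithBot ℝ) else 0) else ⊥
          rw [if_pos rfl, if_neg hij]
          simp [xDiag, hij]
      · intro k hk
        show (if i = k then (if (i:ℕ) < m then ((wnat n W i i : ℝ) : WithBot ℝ) else 0) else ⊥)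
            + xDiag n m (wnat n W m m) k j = ⊥
        rw [if_neg (fun h => hk (Fin.ext (congrArg Fin.val h)).symm), WithBot.bot_add]

lemma Dmat_eq : Dmat n W =
    fun i j => if i = j then ((wnat n W i.val i.val : ℝ) : WithBot ℝ) else ⊥ := by
  have : Dmat n W = mprod n ((List.range n).map fun i => xDiag n i (wnat n W i i)) := rfl
  rw [this, Dpart_eq]
  funext i j
  by_cases hij : i = j <;> simp [hij, i.isLt]

end Dmat

section Group
variable {n : ℕ} (W : Matrix (Fin n) (Fin n) ℝ)

lemma Gpart_eq (g : ℕ) (hg : g + 2 ≤ n) : ∀ s, s ≤ g + 1 →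
    mprod n ((List.range s).map fun t => xLow n (n - g + t - 2) (wnat n W (n - g + t - 1) t)) =
    fun i j : Fin n => if i = j then 0
      else if (i:ℕ) = (j:ℕ) + 1 ∧ n ≤ (j:ℕ) + g + 2 ∧ (j:ℕ) + g + 2 - n < s then
        ((wnat n W ((j:ℕ)+1) ((j:ℕ)+g+2-n) : ℝ) : WithBot ℝ)
      else ⊥ := by
  intro s
  induction s with
  | zero =>
      intro _
      funext i j
      simp only [List.range_zero, List.map_nil, mprod_nil', tropId]
      split_ifs with h1 h2 <;> first | rfl | omega
  | succ s ih =>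
      intro hs
      rw [List.range_succ, List.map_append, List.map_singleton, mprod_append, mprod_single,
        ih (by omega)]
      funext i j
      show Finset.univ.sup _ = _
      have haval : (n - g + s - 2) + g + 2 = n + s := by omega
      by_cases hja : (j:ℕ) = n - g + s - 2
      · have hk1 : (j:ℕ) + 1 < n := by omega
        rw [sup_eq_pair _ j ⟨(j:ℕ)+1, hk1⟩ ?side]
        case side =>
          intro k hk0 hk1'
          have hXbot : xLow n (n - g + s - 2) (wnat n W (n - g + s - 1) s) k j = ⊥ := by
            simp only [xLow]
            rw [if_neg (by exact fun h => hk0 h), if_neg]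
            rintro ⟨h1, h2⟩
            exact hk1' (Fin.ext (show (k:ℕ) = (j:ℕ) + 1 by omega))
          rw [hXbot, WithBot.add_bot]
        · have hXdiag : xLow n (n - g + s - 2) (wnat n W (n - g + s - 1) s) j j = 0 := by
            simp [xLow]
          have hXsub : xLow n (n - g + s - 2) (wnat n W (n - g + s - 1) s) ⟨(j:ℕ)+1, hk1⟩ j
              = ((wnat n W ((j:ℕ)+1) ((j:ℕ)+g+2-n) : ℝ) : WithBot ℝ) := by
            simp only [xLow]
            rw [if_neg (by intro h; have := congrArg Fin.val h; simp at this),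
              if_pos ⟨show (j:ℕ)+1 = (n-g+s-2)+1 by omega, hja⟩]
            have e1 : n - g + s - 1 = (j:ℕ) + 1 := by omega
            have e2 : s = (j:ℕ) + g + 2 - n := by omega
            rw [e1, e2]
          rw [hXdiag, hXsub, add_zero]
          simp only []
          by_cases hij : i = j
          · subst hij
            rw [if_pos rfl, if_pos rfl,
              if_neg (by intro h; have := congrArg Fin.val h; simp at this),
              if_neg (by rintro ⟨h1, h2, h3⟩; omega), WithBot.bot_add]
            simp
          · have hmk : ((⟨(j:ℕ)+1, hk1⟩ : Fin n) : ℕ) = (j:ℕ)+1 := rfl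
            rw [if_neg hij, if_neg hij,
              if_neg (by rintro ⟨h1, h2, h3⟩; omega)]
            by_cases hik : i = (⟨(j:ℕ)+1, hk1⟩ : Fin n)
            · rw [if_pos hik, zero_add]
              have hival : (i:ℕ) = (j:ℕ) + 1 := by rw [hik]
              rw [if_pos ⟨hival, by omega, by omega⟩]
              simp
            · rw [if_neg hik,
                if_neg (by
                  rintro ⟨h1, h2, h3⟩
                  omega),
                if_neg (by
                  rintro ⟨h1, h2, h3⟩
                  exact hik (Fin.ext (show (i:ℕ) = (j:ℕ) + 1 from h1))),
                WithBot.bot_add]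
              simp
      · rw [sup_eq_single _ j ?sideb]
        case sideb =>
          intro k hk0
          have hXbot : xLow n (n - g + s - 2) (wnat n W (n - g + s - 1) s) k j = ⊥ := by
            simp only [xLow]
            rw [if_neg (by exact fun h => hk0 h), if_neg (by rintro ⟨h1, h2⟩; exact hja h2)]
          rw [hXbot, WithBot.add_bot]
        · have hXdiag : xLow n (n - g + s - 2) (wnat n W (n - g + s - 1) s) j j = 0 := by
            simp [xLow]
          rw [hXdiag, add_zero]
          simp only []
          have hja' : (j:ℕ) + g + 2 ≠ n + s := by omega
          split_ifs with h1 h2 h3 <;> first | rfl | omega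

end Group

section Outer
variable {n : ℕ} (W : Matrix (Fin n) (Fin n) ℝ)

lemma sum_Icc_bot (f : ℕ → ℝ) {a b : ℕ} (h : a ≤ b) :
    ∑ r ∈ Finset.Icc a b, f r = f a + ∑ r ∈ Finset.Icc (a+1) b, f r := by
  have he : Finset.Icc a b = insert a (Finset.Icc (a+1) b) := by
    ext x; simp only [Finset.mem_Icc, Finset.mem_insert]; omega
  rw [he, Finset.sum_insert (by simp only [Finset.mem_Icc]; omega)]

/-- column monotonicity hypothesis -/
def Hcol (n : ℕ) (W : Matrix (Fin n) (Fin n) ℝ) : Prop :=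
  ∀ r c : ℕ, c + 2 ≤ r → r < n → wnat n W r c ≤ wnat n W r (c + 1)

lemma wnat_mono (HW : Hcol n W) {r : ℕ} (h3 : r < n) :
    ∀ c' c, c ≤ c' → c' + 1 ≤ r → wnat n W r c ≤ wnat n W r c' := by
  intro c'
  induction c' with
  | zero => intro c h _; rw [Nat.le_zero.mp h]
  | succ d ih =>
      intro c h h2
      rcases Nat.lt_or_ge c (d+1) with hc | hc
      · exact le_trans (ih c (by omega) (by omega)) (HW r d (by omega) h3)
      · have hcd : c = d + 1 := by omega
        subst hcd; exact le_rfl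

/-- closed form for partial products of the lower factor -/
def LclM (n m : ℕ) (W : Matrix (Fin n) (Fin n) ℝ) : Matrix (Fin n) (Fin n) (WithBot ℝ) :=
  fun i j => if i = j then 0
    else if (j:ℕ) < (i:ℕ) ∧ n ≤ (j:ℕ) + m + 1 then
      ((∑ r ∈ Finset.Icc ((j:ℕ)+1) (i:ℕ), wnat n W r ((j:ℕ)+m+1-n) : ℝ) : WithBot ℝ)
    else ⊥

/-- closed form for a complete group product -/
def GclM (n g : ℕ) (W : Matrix (Fin n) (Fin n) ℝ) : Matrix (Fin n) (Fin n) (WithBot ℝ) :=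
  fun i j => if i = j then 0
    else if (i:ℕ) = (j:ℕ) + 1 ∧ n ≤ (j:ℕ) + g + 2 ∧ (j:ℕ) + g + 2 - n < g + 1 then
      ((wnat n W ((j:ℕ)+1) ((j:ℕ)+g+2-n) : ℝ) : WithBot ℝ)
    else ⊥

lemma LclM_diag (m : ℕ) (i : Fin n) : LclM n m W i i = 0 := by simp [LclM]

lemma LclM_bot (m : ℕ) {i j : Fin n} (hij : i ≠ j)
    (h : ¬((j:ℕ) < (i:ℕ) ∧ n ≤ (j:ℕ) + m + 1)) : LclM n m W i j = ⊥ := by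
  rw [LclM, if_neg hij, if_neg h]

lemma LclM_val (m : ℕ) {i j : Fin n} (hji : (j:ℕ) < (i:ℕ)) (h : n ≤ (j:ℕ) + m + 1) :
    LclM n m W i j
      = ((∑ r ∈ Finset.Icc ((j:ℕ)+1) (i:ℕ), wnat n W r ((j:ℕ)+m+1-n) : ℝ) : WithBot ℝ) := by
  rw [LclM, if_neg (fun he => by rw [he] at hji; omega), if_pos ⟨hji, h⟩]

lemma GclM_diag (g : ℕ) (j : Fin n) : GclM n g W j j = 0 := by simp [GclM]

lemma GclM_bot (g : ℕ) {k j : Fin n} (hkj : k ≠ j)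
    (h : ¬((k:ℕ) = (j:ℕ) + 1 ∧ n ≤ (j:ℕ) + g + 2 ∧ (j:ℕ) + g + 2 - n < g + 1)) :
    GclM n g W k j = ⊥ := by
  rw [GclM, if_neg hkj, if_neg h]

lemma GclM_val (g : ℕ) {k j : Fin n} (hk : (k:ℕ) = (j:ℕ) + 1) (h2 : n ≤ (j:ℕ) + g + 2)
    (h3 : (j:ℕ) + g + 2 - n < g + 1) :
    GclM n g W k j = ((wnat n W ((j:ℕ)+1) ((j:ℕ)+g+2-n) : ℝ) : WithBot ℝ) := by
  rw [GclM, if_neg (fun he => by rw [he] at hk; omega), if_pos ⟨hk, h2, h3⟩]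

lemma LclM_zero : LclM n 0 W = tropId n := by
  funext i j
  have hi := i.isLt
  rw [LclM, tropId]
  split_ifs with h1 h2 <;> first | rfl | omega

lemma LclM_step (HW : Hcol n W) (m : ℕ) (hg : m + 2 ≤ n) :
    tropMul (LclM n m W) (GclM n m W) = LclM n (m+1) W := by
  funext i j
  have hi := i.isLt
  have hj := j.isLt
  show Finset.univ.sup (fun k => LclM n m W i k + GclM n m W k j) = _
  by_cases hjtop : (j:ℕ) + 1 < n
  · -- the one-below-diagonal entry of the group matrix exists in column j
    set k1 : Fin n := ⟨(j:ℕ)+1, hjtop⟩ with hk1def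
    have hmk : (k1 : ℕ) = (j:ℕ)+1 := rfl
    have hk1j : k1 ≠ j := by
      intro h; have := congrArg Fin.val h; rw [hmk] at this; omega
    have hside : ∀ k, k ≠ j → k ≠ k1 → LclM n m W i k + GclM n m W k j = ⊥ := by
      intro k hk0 hk1'
      have hb : GclM n m W k j = ⊥ := by
        apply GclM_bot W m hk0
        rintro ⟨h1, h2, h3⟩
        exact hk1' (Fin.ext (by rw [hmk]; exact h1))
      rw [hb, WithBot.add_bot]
    rw [sup_eq_pair _ j k1 hside, GclM_diag, add_zero]
    by_cases hn2 : n ≤ (j:ℕ) + m + 2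
    · rw [GclM_val W m hmk hn2 (by omega)]
      by_cases hij : i = j
      · subst hij
        rw [LclM_diag, LclM_bot W m (by
            intro h; have := congrArg Fin.val h; rw [hmk] at this; omega)
          (by rw [hmk]; omega), WithBot.bot_add, LclM_diag]
        simp
      · by_cases hji : (j:ℕ) < (i:ℕ)
        · have hLk1 : LclM n m W i k1
              = ((∑ r ∈ Finset.Icc ((j:ℕ)+2) (i:ℕ), wnat n W r ((j:ℕ)+m+2-n) : ℝ) : WithBot ℝ) := by
            by_cases hik : i = k1
            · rw [hik, LclM_diag,
                show Finset.Icc ((j:ℕ)+2) ((k1:ℕ)) = ∅ from Finset.Icc_eq_empty (by omega)]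
              simp
            · have hiv : (i:ℕ) ≠ (j:ℕ)+1 := fun h => hik (Fin.ext (by rw [hmk]; exact h))
              rw [LclM_val W m (by rw [hmk]; omega) (by rw [hmk]; omega), hmk,
                show (j:ℕ)+1+1 = (j:ℕ)+2 by omega, show (j:ℕ)+1+m+1 = (j:ℕ)+m+2 by omega]
          rw [hLk1, ← WithBot.coe_add]
          have hsum : (∑ r ∈ Finset.Icc ((j:ℕ)+2) (i:ℕ), wnat n W r ((j:ℕ)+m+2-n))
              + wnat n W ((j:ℕ)+1) ((j:ℕ)+m+2-n)
              = ∑ r ∈ Finset.Icc ((j:ℕ)+1) (i:ℕ), wnat n W r ((j:ℕ)+m+2-n) := by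
            rw [sum_Icc_bot (fun r => wnat n W r ((j:ℕ)+m+2-n)) (show (j:ℕ)+1 ≤ (i:ℕ) by omega),
              show (j:ℕ)+1+1 = (j:ℕ)+2 by omega]
            ring
          rw [hsum, LclM_val W (m+1) hji (by omega),
            show (j:ℕ)+(m+1)+1 = (j:ℕ)+m+2 by omega]
          apply sup_eq_right.mpr
          by_cases hn1 : n ≤ (j:ℕ) + m + 1
          · rw [LclM_val W m hji hn1, WithBot.coe_le_coe]
            apply Finset.sum_le_sum
            intro r hr
            rw [Finset.mem_Icc] at hr
            exact wnat_mono W HW (show r < n by omega) ((j:ℕ)+m+2-n) ((j:ℕ)+m+1-n)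
              (by omega) (by omega)
          · rw [LclM_bot W m hij (by omega)]
            exact bot_le
        · have h1 : LclM n m W i j = ⊥ := LclM_bot W m hij (by omega)
          have h2 : LclM n m W i k1 = ⊥ := by
            apply LclM_bot W m
            · intro h; have := congrArg Fin.val h; rw [hmk] at this; omega
            · rw [hmk]; omega
          have h3 : LclM n (m+1) W i j = ⊥ := LclM_bot W (m+1) hij (by omega)
          rw [h1, h2, h3, WithBot.bot_add]
          simp
    · rw [GclM_bot W m hk1j (by rw [hmk]; omega), WithBot.add_bot, sup_bot_eq]
      by_cases hij : i = j
      · rw [hij, LclM_diag, LclM_diag]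
      · rw [LclM_bot W m hij (by omega), LclM_bot W (m+1) hij (by omega)]
  · have hside : ∀ k, k ≠ j → LclM n m W i k + GclM n m W k j = ⊥ := by
      intro k hk0
      have hk := k.isLt
      have hb : GclM n m W k j = ⊥ := by
        apply GclM_bot W m hk0
        rintro ⟨h1, h2, h3⟩
        omega
      rw [hb, WithBot.add_bot]
    rw [sup_eq_single _ j hside, GclM_diag, add_zero]
    by_cases hij : i = j
    · rw [hij, LclM_diag, LclM_diag]
    · rw [LclM_bot W m hij (by omega), LclM_bot W (m+1) hij (by omega)]

lemma Lpart_eq (HW : Hcol n W) : ∀ m, m ≤ n - 1 →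
    mprod n ((List.range m).flatMap fun k => (List.range (k + 1)).map fun t =>
      xLow n (n - k + t - 2) (wnat n W (n - k + t - 1) t)) = LclM n m W := by
  intro m
  induction m with
  | zero =>
      intro _
      rw [LclM_zero]
      rfl
  | succ m ihm =>
      intro hm
      have hg : m + 2 ≤ n := by omega
      rw [List.range_succ, List.flatMap_append, mprod_append,
        ihm (by omega), List.flatMap_singleton, Gpart_eq W m hg (m+1) le_rfl,
        show (fun i j : Fin n => if i = j then 0
          else if (i:ℕ) = (j:ℕ) + 1 ∧ n ≤ (j:ℕ) + m + 2 ∧ (j:ℕ) + m + 2 - n < m + 1 then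
            ((wnat n W ((j:ℕ)+1) ((j:ℕ)+m+2-n) : ℝ) : WithBot ℝ)
          else ⊥) = GclM n m W from rfl]
      exact LclM_step W HW m hg

lemma Lmat_eq (HW : Hcol n W) : Lmat n W = LclM n (n-1) W := by
  have h := Lpart_eq W HW (n-1) le_rfl
  exact h

lemma Lmat_entry (HW : Hcol n W) (i j : Fin n) :
    Lmat n W i j = if i = j then 0
      else if (j:ℕ) < (i:ℕ) then
        ((∑ r ∈ Finset.Icc ((j:ℕ)+1) (i:ℕ), wnat n W r (j:ℕ) : ℝ) : WithBot ℝ)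
      else ⊥ := by
  rw [Lmat_eq W HW]
  have hi := i.isLt
  have hj := j.isLt
  by_cases hij : i = j
  · rw [hij, LclM_diag, if_pos rfl]
  · rw [if_neg hij]
    by_cases hji : (j:ℕ) < (i:ℕ)
    · rw [LclM_val W (n-1) hji (by omega), if_pos hji,
        show (j:ℕ) + (n-1) + 1 - n = (j:ℕ) by omega]
    · rw [LclM_bot W (n-1) hij (by omega), if_neg hji]

end Outer

section Transfer
variable {n : ℕ} (W : Matrix (Fin n) (Fin n) ℝ)

lemma wnat_eq {a b : ℕ} (ha : a < n) (hb : b < n) : wnat n W a b = W ⟨a, ha⟩ ⟨b, hb⟩ :=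
  dif_pos ⟨ha, hb⟩

lemma wnat_val (i j : Fin n) : wnat n W (i:ℕ) (j:ℕ) = W i j := by
  rw [wnat_eq W i.isLt j.isLt]

lemma wnat_transpose (a b : ℕ) : wnat n W.transpose a b = wnat n W b a := by
  unfold wnat
  by_cases h : a < n ∧ b < n
  · rw [dif_pos h, dif_pos ⟨h.2, h.1⟩, Matrix.transpose_apply]
  · rw [dif_neg h, dif_neg (fun h2 => h ⟨h2.2, h2.1⟩)]

lemma Lmat_entry_le (HW : Hcol n W) {i k : Fin n} (h : (k:ℕ) ≤ (i:ℕ)) :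
    Lmat n W i k = ((∑ r ∈ Finset.Icc ((k:ℕ)+1) (i:ℕ), wnat n W r (k:ℕ) : ℝ) : WithBot ℝ) := by
  rw [Lmat_entry W HW]
  by_cases hik : i = k
  · rw [if_pos hik, hik, show Finset.Icc ((k:ℕ)+1) ((k:ℕ)) = ∅ from Finset.Icc_eq_empty (by omega)]
    simp
  · have : (k:ℕ) < (i:ℕ) := by
      rcases Nat.lt_or_ge (k:ℕ) (i:ℕ) with h' | h'
      · exact h'
      · exact absurd (Fin.ext (by omega) : i = k) hik
    rw [if_neg hik, if_pos this]

lemma Lmat_entry_bot (HW : Hcol n W) {i k : Fin n} (h : (i:ℕ) < (k:ℕ)) :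
    Lmat n W i k = ⊥ := by
  rw [Lmat_entry W HW, if_neg (fun he => by rw [he] at h; omega), if_neg (by omega)]

lemma LD_entry (HW : Hcol n W) (i k : Fin n) :
    tropMul (Lmat n W) (Dmat n W) i k
      = Lmat n W i k + ((wnat n W (k:ℕ) (k:ℕ) : ℝ) : WithBot ℝ) := by
  show Finset.univ.sup (fun t => Lmat n W i t + Dmat n W t k) = _
  have hside : ∀ t, t ≠ k → Lmat n W i t + Dmat n W t k = ⊥ := by
    intro t ht
    have hD : Dmat n W t k = ⊥ := by rw [Dmat_eq]; exact if_neg ht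
    rw [hD, WithBot.add_bot]
  rw [sup_eq_single _ k hside]
  have hD : Dmat n W k k = ((wnat n W (k:ℕ) (k:ℕ) : ℝ) : WithBot ℝ) := by
    rw [Dmat_eq]; exact if_pos rfl
  rw [hD]

/-- real value of the k-th path family weight -/
def Fk (n : ℕ) (W : Matrix (Fin n) (Fin n) ℝ) (i j k : ℕ) : ℝ :=
  (∑ r ∈ Finset.Icc (k+1) i, wnat n W r k) + wnat n W k k
    + (∑ t ∈ Finset.Icc (k+1) j, wnat n W k t)

lemma Tmat_term_val (HW : Hcol n W) (HWt : Hcol n W.transpose) {i j k : Fin n}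
    (hki : (k:ℕ) ≤ (i:ℕ)) (hkj : (k:ℕ) ≤ (j:ℕ)) :
    tropMul (Lmat n W) (Dmat n W) i k + (Lmat n W.transpose).transpose k j
      = ((Fk n W i j (k:ℕ) : ℝ) : WithBot ℝ) := by
  rw [LD_entry W HW, Matrix.transpose_apply, Lmat_entry_le W HW hki,
    Lmat_entry_le W.transpose HWt hkj]
  rw [show (∑ r ∈ Finset.Icc ((k:ℕ)+1) ((j:ℕ)), wnat n W.transpose r (k:ℕ))
      = ∑ t ∈ Finset.Icc ((k:ℕ)+1) ((j:ℕ)), wnat n W (k:ℕ) t from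
    Finset.sum_congr rfl (fun t _ => wnat_transpose W t (k:ℕ))]
  rw [← WithBot.coe_add, ← WithBot.coe_add]
  rfl

lemma Tmat_term_bot (HW : Hcol n W) (HWt : Hcol n W.transpose) {i j k : Fin n}
    (h : ¬((k:ℕ) ≤ (i:ℕ) ∧ (k:ℕ) ≤ (j:ℕ))) :
    tropMul (Lmat n W) (Dmat n W) i k + (Lmat n W.transpose).transpose k j = ⊥ := by
  rcases Nat.lt_or_ge (i:ℕ) (k:ℕ) with h1 | h1
  · rw [LD_entry W HW, Lmat_entry_bot W HW h1, WithBot.bot_add, WithBot.bot_add]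
  · have h2 : (j:ℕ) < (k:ℕ) := by omega
    rw [Matrix.transpose_apply, Lmat_entry_bot W.transpose HWt h2, WithBot.add_bot]

/-- trapeze hypothesis in wnat form -/
def Htrap (n : ℕ) (W : Matrix (Fin n) (Fin n) ℝ) : Prop :=
  ∀ k : ℕ, k + 1 < n →
    wnat n W (k+1) k + wnat n W k k + wnat n W k (k+1) ≤ wnat n W (k+1) (k+1)

lemma Fk_step (HW : Hcol n W) (HWt : Hcol n W.transpose) (HT : Htrap n W)
    {i j k : ℕ} (hi : i < n) (hj : j < n) (hk1 : k + 1 ≤ i) (hk2 : k + 1 ≤ j) :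
    Fk n W i j k ≤ Fk n W i j (k+1) := by
  unfold Fk
  rw [sum_Icc_bot (fun r => wnat n W r k) hk1, sum_Icc_bot (fun t => wnat n W k t) hk2]
  have hA : (∑ r ∈ Finset.Icc (k+2) i, wnat n W r k)
      ≤ ∑ r ∈ Finset.Icc (k+2) i, wnat n W r (k+1) := by
    apply Finset.sum_le_sum
    intro r hr
    rw [Finset.mem_Icc] at hr
    exact HW r k (by omega) (by omega)
  have hC : (∑ t ∈ Finset.Icc (k+2) j, wnat n W k t)
      ≤ ∑ t ∈ Finset.Icc (k+2) j, wnat n W (k+1) t := by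
    apply Finset.sum_le_sum
    intro t ht
    rw [Finset.mem_Icc] at ht
    have := HWt t k (by omega) (by omega)
    rwa [wnat_transpose, wnat_transpose] at this
  have hB := HT k (by omega)
  have e1 : k + 1 + 1 = k + 2 := by omega
  rw [e1]
  linarith [hA, hC, hB]

lemma Fk_chain (HW : Hcol n W) (HWt : Hcol n W.transpose) (HT : Htrap n W)
    {i j : ℕ} (hi : i < n) (hj : j < n) :
    ∀ b a, a ≤ b → b ≤ i → b ≤ j → Fk n W i j a ≤ Fk n W i j b := by
  intro b
  induction b with
  | zero => intro a h _ _; rw [Nat.le_zero.mp h]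
  | succ d ih =>
      intro a h hbi hbj
      rcases Nat.lt_or_ge a (d+1) with hc | hc
      · exact le_trans (ih a (by omega) (by omega) (by omega))
          (Fk_step W HW HWt HT hi hj hbi hbj)
      · have : a = d + 1 := by omega
        rw [this]

lemma psi_le_eq {i j : Fin n} (hij : (i:ℕ) ≤ (j:ℕ)) :
    psi n W i j = ∑ t ∈ Finset.Icc (i:ℕ) (j:ℕ), wnat n W (i:ℕ) t := by
  rw [psi, if_pos (by exact hij)]
  apply Finset.sum_bij' (fun (t : Fin n) (_ : t ∈ Finset.Icc i j) => (t:ℕ))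
    (fun (t : ℕ) (ht : t ∈ Finset.Icc (i:ℕ) (j:ℕ)) =>
      (⟨t, by rw [Finset.mem_Icc] at ht; omega⟩ : Fin n))
  all_goals intro a ha
  all_goals first
    | rfl
    | exact (wnat_val W i a).symm
    | (simp only [Finset.mem_Icc, Fin.le_def] at ha ⊢; omega)
    | simp

lemma psi_ge_eq {i j : Fin n} (hij : (j:ℕ) ≤ (i:ℕ)) (hne : ¬ i ≤ j) :
    psi n W i j = ∑ t ∈ Finset.Icc (j:ℕ) (i:ℕ), wnat n W t (j:ℕ) := by
  rw [psi, if_neg hne]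
  apply Finset.sum_bij' (fun (t : Fin n) (_ : t ∈ Finset.Icc j i) => (t:ℕ))
    (fun (t : ℕ) (ht : t ∈ Finset.Icc (j:ℕ) (i:ℕ)) =>
      (⟨t, by rw [Finset.mem_Icc] at ht; omega⟩ : Fin n))
  all_goals intro a ha
  all_goals first
    | rfl
    | exact (wnat_val W a j).symm
    | (simp only [Finset.mem_Icc, Fin.le_def] at ha ⊢; omega)
    | simp

end Transfer

section Final
variable {n : ℕ} (W : Matrix (Fin n) (Fin n) ℝ)

lemma sum_Icc_top (f : ℕ → ℝ) {a b : ℕ} (h : a ≤ b) (h0 : 0 < b) :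
    ∑ r ∈ Finset.Icc a b, f r = (∑ r ∈ Finset.Icc a (b-1), f r) + f b := by
  have he : Finset.Icc a b = insert b (Finset.Icc a (b-1)) := by
    ext x; simp only [Finset.mem_Icc, Finset.mem_insert]; omega
  rw [he, Finset.sum_insert (by simp only [Finset.mem_Icc]; omega)]
  ring

lemma hcol_of_para (h2 : WeakPara n W) : Hcol n W := by
  intro r c h hr
  rw [wnat_eq W hr (by omega), wnat_eq W hr (by omega)]
  exact (h2 ⟨r, hr⟩ ⟨c, by omega⟩ h).1

lemma hcolT_of_para (h2 : WeakPara n W) : Hcol n W.transpose := by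
  intro r c h hr
  rw [wnat_transpose, wnat_transpose, wnat_eq W (by omega) hr, wnat_eq W (by omega) hr]
  exact (h2 ⟨r, hr⟩ ⟨c, by omega⟩ h).2

lemma htrap_of (h1 : WeakTrapeze n W) : Htrap n W := by
  intro k hk
  rw [wnat_eq W hk (by omega), wnat_eq W (by omega) (by omega),
    wnat_eq W (by omega) hk, wnat_eq W hk hk]
  exact h1 ⟨k+1, hk⟩ (Nat.succ_pos k)

lemma psi_eq_Fk (i j : Fin n) :
    psi n W i j = Fk n W (i:ℕ) (j:ℕ) (min (i:ℕ) (j:ℕ)) := by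
  rcases le_or_gt (i:ℕ) (j:ℕ) with hle | hlt
  · rw [psi_le_eq W hle, show min (i:ℕ) (j:ℕ) = (i:ℕ) by omega]
    unfold Fk
    rw [show Finset.Icc ((i:ℕ)+1) ((i:ℕ)) = ∅ from Finset.Icc_eq_empty (by omega),
      sum_Icc_bot (fun t => wnat n W (i:ℕ) t) hle, Finset.sum_empty]
    ring
  · have hne : ¬ i ≤ j := fun hc => absurd (Fin.le_def.mp hc) (by omega)
    rw [psi_ge_eq W (by omega) hne, show min (i:ℕ) (j:ℕ) = (j:ℕ) by omega]
    unfold Fk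
    rw [show Finset.Icc ((j:ℕ)+1) ((j:ℕ)) = ∅ from Finset.Icc_eq_empty (by omega),
      sum_Icc_bot (fun t => wnat n W t (j:ℕ)) (by omega : (j:ℕ) ≤ (i:ℕ)), Finset.sum_empty]
    ring

lemma psi_ge_eq' {i j : Fin n} (hij : (j:ℕ) ≤ (i:ℕ)) :
    psi n W i j = ∑ t ∈ Finset.Icc (j:ℕ) (i:ℕ), wnat n W t (j:ℕ) := by
  by_cases hle : i ≤ j
  · have hij2 : i = j := Fin.ext (by have := Fin.le_def.mp hle; omega)
    subst hij2
    rw [psi, if_pos le_rfl, Finset.Icc_self, Finset.Icc_self, Finset.sum_singleton,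
      Finset.sum_singleton, wnat_val]
  · exact psi_ge_eq W hij hle

lemma Tmat_eq_psi (HW : Hcol n W) (HWt : Hcol n W.transpose) (HT : Htrap n W) (i j : Fin n) :
    Tmat n W i j = ((psi n W i j : ℝ) : WithBot ℝ) := by
  have hi := i.isLt
  have hj := j.isLt
  show Finset.univ.sup (fun k => tropMul (Lmat n W) (Dmat n W) i k
    + (Lmat n W.transpose).transpose k j) = _
  rw [psi_eq_Fk]
  have hkm : ((if (i:ℕ) ≤ (j:ℕ) then i else j : Fin n) : ℕ) = min (i:ℕ) (j:ℕ) := by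
    split_ifs with h <;> omega
  apply le_antisymm
  · apply Finset.sup_le
    intro k _
    by_cases hk : (k:ℕ) ≤ (i:ℕ) ∧ (k:ℕ) ≤ (j:ℕ)
    · rw [Tmat_term_val W HW HWt hk.1 hk.2, WithBot.coe_le_coe]
      exact Fk_chain W HW HWt HT hi hj (min (i:ℕ) (j:ℕ)) (k:ℕ) (by omega) (by omega) (by omega)
    · rw [Tmat_term_bot W HW HWt hk]
      exact bot_le
  · have hle := Finset.le_sup (f := fun k => tropMul (Lmat n W) (Dmat n W) i k
      + (Lmat n W.transpose).transpose k j)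
      (Finset.mem_univ (if (i:ℕ) ≤ (j:ℕ) then i else j : Fin n))
    refine le_trans (le_of_eq ?_) hle
    show _ = tropMul (Lmat n W) (Dmat n W) i _ + (Lmat n W.transpose).transpose _ j
    rw [Tmat_term_val W HW HWt (by omega) (by omega), hkm]

end Final

theorem weights_unique_of_weak_ineqs' (n : ℕ) (W W' : Matrix (Fin n) (Fin n) ℝ)
    (h1 : WeakTrapeze n W) (h2 : WeakPara n W)
    (h1' : WeakTrapeze n W') (h2' : WeakPara n W')
    (h : Tmat n W = Tmat n W') : W = W' := by
  have HW := hcol_of_para W h2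
  have HWt := hcolT_of_para W h2
  have HT := htrap_of W h1
  have HW' := hcol_of_para W' h2'
  have HWt' := hcolT_of_para W' h2'
  have HT' := htrap_of W' h1'
  have hpsi : ∀ i j : Fin n, psi n W i j = psi n W' i j := by
    intro i j
    have hT := congrFun (congrFun h i) j
    rw [Tmat_eq_psi W HW HWt HT i j, Tmat_eq_psi W' HW' HWt' HT' i j] at hT
    exact WithBot.coe_inj.mp hT
  funext i j
  have hi := i.isLt
  have hj := j.isLt
  rcases lt_trichotomy (i:ℕ) (j:ℕ) with hlt | heq | hgt
  · -- i < j : recover from row sums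
    have hjm : ((⟨(j:ℕ)-1, by omega⟩ : Fin n) : ℕ) = (j:ℕ)-1 := rfl
    have key : ∀ (V : Matrix (Fin n) (Fin n) ℝ),
        V i j = psi n V i j - psi n V i ⟨(j:ℕ)-1, by omega⟩ := by
      intro V
      rw [psi_le_eq V (by omega), psi_le_eq V (by rw [hjm]; omega), hjm,
        sum_Icc_top (fun t => wnat n V (i:ℕ) t) (by omega) (by omega), ← wnat_val V i j]
      ring
    rw [key W, key W', hpsi i j, hpsi i ⟨(j:ℕ)-1, by omega⟩]
  · have hij : i = j := Fin.ext heq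
    subst hij
    have := hpsi i i
    rw [psi_le_eq W le_rfl, psi_le_eq W' le_rfl, Finset.Icc_self, Finset.sum_singleton,
      Finset.sum_singleton, wnat_val, wnat_val] at this
    exact this
  · -- j < i : recover from column sums
    have him : ((⟨(i:ℕ)-1, by omega⟩ : Fin n) : ℕ) = (i:ℕ)-1 := rfl
    have key : ∀ (V : Matrix (Fin n) (Fin n) ℝ),
        V i j = psi n V i j - psi n V ⟨(i:ℕ)-1, by omega⟩ j := by
      intro V
      rw [psi_ge_eq' V (by omega), psi_ge_eq' V (by rw [him]; omega), him,
        sum_Icc_top (fun t => wnat n V t (j:ℕ)) (by omega) (by omega), ← wnat_val V i j]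
      ring
    rw [key W, key W', hpsi i j, hpsi ⟨(i:ℕ)-1, by omega⟩ j]

/-- uniqueness of the weights satisfying the weak trapeze and
parallelogram inequalities representing a given transfer matrix. -/
theorem weights_unique_of_weak_ineqs (n : ℕ) (W W' : Matrix (Fin n) (Fin n) ℝ)
    (h1 : WeakTrapeze n W) (h2 : WeakPara n W)
    (h1' : WeakTrapeze n W') (h2' : WeakPara n W')
    (h : Tmat n W = Tmat n W') : W = W' := by
  exact weights_unique_of_weak_ineqs' n W W' h1 h2 h1' h2' h
end

section
/- If an n×n real matrix A is tropical totally positive (A ∈ TPtrop), then there exists a unique weight matrix W ∈ Matrix (Fin n) (Fin n) ℝ whose tropical transfer matrix equals A, i.e., T(W) = A (entrywise, coercing real entries into ℝ ∪ {−∞}). -/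
open Finset

namespace TPtropAux
open Finset

lemma sup'_range_succ {α} [LinearOrder α] (f : ℕ → α) (v : ℕ) :
    (range (v+2)).sup' (by simp) f = max ((range (v+1)).sup' (by simp) f) (f (v+1)) := by
  apply le_antisymm
  · apply Finset.sup'_le; intro b hb; simp only [Finset.mem_range] at hb
    rcases Nat.lt_succ_iff_lt_or_eq.1 hb with h | h
    · exact le_max_of_le_left (Finset.le_sup' _ (by simp [h]))
    · subst h; exact le_max_right _ _
  · apply max_le
    · apply Finset.sup'_le; intro b hb
      exact Finset.le_sup' _ (by simp only [Finset.mem_range] at hb ⊢; omega)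
    · exact Finset.le_sup' _ (by simp)

lemma add_sup' (c : ℝ) (s : Finset ℕ) (H : s.Nonempty) (f : ℕ → ℝ) :
    c + s.sup' H f = s.sup' H (fun x => c + f x) :=
  Finset.comp_sup'_eq_sup'_comp H (fun x => c + x) (fun x y => by simp [max_add_add_left])

lemma step_mono_le {v : ℕ} (f : ℕ → ℝ) (hm : ∀ c, c + 1 ≤ v → f c ≤ f (c+1)) :
    ∀ c, c ≤ v → f c ≤ f v := by
  have key : ∀ k c, c + k ≤ v → f c ≤ f (c + k) := by
    intro k
    induction k with
    | zero => intro c _; simp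
    | succ k ih =>
      intro c h
      calc f c ≤ f (c + k) := ih c (by omega)
        _ ≤ f (c + k + 1) := hm _ (by omega)
  intro c hc
  have := key (v - c) c (by omega)
  rwa [show c + (v - c) = v by omega] at this

noncomputable def G (n : ℕ) (W : Matrix (Fin n) (Fin n) ℝ) (a m v : ℕ) : ℝ :=
  if h : m < a then
    (Finset.range (v+1)).sup' (by simp) (fun c => wnat n W (m+1) c + G n W a (m+1) c)
  else 0
  termination_by a - m
  decreasing_by omega

lemma G_of_ge {n : ℕ} {W} {a m : ℕ} (v : ℕ) (h : a ≤ m) : G n W a m v = 0 := by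
  rw [G]; simp [Nat.not_lt.2 h]

lemma G_rec {n : ℕ} {W} {a m v : ℕ} (h : m < a) :
    G n W a m v = (Finset.range (v+1)).sup' (by simp)
      (fun c => wnat n W (m+1) c + G n W a (m+1) c) := by
  rw [G]; simp [h]

lemma G_zero {n : ℕ} {W} {a m : ℕ} (h : m < a) :
    G n W a m 0 = wnat n W (m+1) 0 + G n W a (m+1) 0 := by
  rw [G_rec h]; simp

lemma G_succ {n : ℕ} {W} {a m v : ℕ} (h : m < a) :
    G n W a m (v+1) = max (G n W a m v) (wnat n W (m+1) (v+1) + G n W a (m+1) (v+1)) := by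
  rw [G_rec h, G_rec h, sup'_range_succ]

lemma G_congr {n : ℕ} {W W'} {a : ℕ} : ∀ {m v : ℕ},
    (∀ t c, m < t → t ≤ a → c ≤ v → wnat n W t c = wnat n W' t c) →
    G n W a m v = G n W' a m v := by
  intro m
  induction' hm : a - m using Nat.strong_induction_on with d ih generalizing m
  intro v hag
  by_cases h : m < a
  · rw [G_rec h, G_rec h]
    apply Finset.sup'_congr _ rfl
    intro c hc; simp only [Finset.mem_range] at hc
    rw [hag (m+1) c (by omega) h (by omega),
      ih (a - (m+1)) (by omega) rfl (fun t c' ht ha hc' => hag t c' (by omega) ha (by omega))]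
  · rw [G_of_ge _ (by omega), G_of_ge _ (by omega)]

/-- one-sided parallelogram inequalities at the `wnat` level -/
def ParaN (n : ℕ) (W : Matrix (Fin n) (Fin n) ℝ) : Prop :=
  ∀ r c : ℕ, c + 2 ≤ r → r < n → wnat n W r c ≤ wnat n W r (c+1)

lemma Ioc_insert {m a : ℕ} (h : m < a) :
    Finset.Ioc m a = insert (m+1) (Finset.Ioc (m+1) a) := by ext x; simp; omega

/-- Value of `G` at caps `v ≤ m`, under weak parallelogram: the uppermost chain wins. -/
lemma G_eq_sum {n : ℕ} {W} (hp : ParaN n W) {a : ℕ} (ha : a < n) :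
    ∀ {m v : ℕ}, v ≤ m → G n W a m v = ∑ t ∈ Finset.Ioc m a, wnat n W t v := by
  intro m
  induction' hd : a - m using Nat.strong_induction_on with d ih generalizing m
  intro v hv
  by_cases h : m < a
  · rw [G_rec h]
    have hterm : ∀ c ≤ v, wnat n W (m+1) c + G n W a (m+1) c
        = ∑ t ∈ Finset.Ioc m a, wnat n W t c := by
      intro c hc
      rw [ih (a - (m+1)) (by omega) rfl (by omega), Ioc_insert h,
        Finset.sum_insert (by simp)]
    apply le_antisymm
    · apply Finset.sup'_le; intro c hc; simp only [Finset.mem_range] at hc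
      rw [hterm c (by omega)]
      refine step_mono_le (fun c => ∑ t ∈ Finset.Ioc m a, wnat n W t c) ?_ c (by omega)
      intro c' hc'
      apply Finset.sum_le_sum
      intro t ht; simp only [Finset.mem_Ioc] at ht
      exact hp t c' (by omega) (by omega)
    · rw [← hterm v le_rfl]
      exact Finset.le_sup' (fun c => wnat n W (m+1) c + G n W a (m+1) c)
        (show v ∈ Finset.range (v+1) from Finset.mem_range.mpr (by omega))
  · rw [G_of_ge _ (by omega), Finset.Ioc_eq_empty (by omega), Finset.sum_empty]

lemma sup'_congr_set {α} [SemilatticeSup α] {s t : Finset ℕ} (h : s = t) (H : s.Nonempty)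
    (f : ℕ → α) : s.sup' H f = t.sup' (h ▸ H) f := by subst h; rfl

lemma sup'_Icc_succ_bot {α} [LinearOrder α] {m b : ℕ} (h : m < b) (f : ℕ → α) :
    (Finset.Icc m b).sup' (Finset.nonempty_Icc.mpr (by omega)) f
      = max (f m) ((Finset.Icc (m+1) b).sup' (Finset.nonempty_Icc.mpr (by omega)) f) := by
  apply le_antisymm
  · apply Finset.sup'_le; intro x hx; simp only [Finset.mem_Icc] at hx
    rcases eq_or_lt_of_le hx.1 with rfl | hlt
    · exact le_max_left _ _
    · exact le_max_of_le_right (Finset.le_sup' _ (Finset.mem_Icc.mpr (by omega)))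
  · apply max_le
    · exact Finset.le_sup' _ (Finset.mem_Icc.mpr (by omega))
    · exact Finset.sup'_le _ _ fun x hx => Finset.le_sup' _
        (by simp only [Finset.mem_Icc] at hx ⊢; omega)

/-- Splitting of `G`, isolating the all-top chain from chains that deviate below. -/
lemma G_split {n : ℕ} {W} {a : ℕ} : ∀ {m : ℕ} (hma : m < a) (v : ℕ),
    G n W a m (v+1) = max (∑ t ∈ Finset.Ioc m a, wnat n W t (v+1))
      ((Finset.Icc m (a-1)).sup' (Finset.nonempty_Icc.mpr (by omega))
        (fun r => (∑ t ∈ Finset.Ioc m r, wnat n W t (v+1)) + G n W a r v)) := by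
  intro m
  induction' hd : a - m using Nat.strong_induction_on with d ih generalizing m
  intro hma v
  by_cases h2 : m + 1 < a
  · rw [G_succ hma, ih (a - (m+1)) (by omega) rfl h2 v]
    rw [sup'_Icc_succ_bot (by omega : m < a - 1)]
    simp only [Finset.Ioc_self, Finset.sum_empty, zero_add]
    rw [← max_add_add_left, add_sup']
    have hrw : ∀ r ∈ Finset.Icc (m+1) (a-1),
        (wnat n W (m+1) (v+1) + ((∑ t ∈ Finset.Ioc (m+1) r, wnat n W t (v+1)) + G n W a r v))
        = (∑ t ∈ Finset.Ioc m r, wnat n W t (v+1)) + G n W a r v := by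
      intro r hr; simp only [Finset.mem_Icc] at hr
      rw [Ioc_insert (by omega : m < r), Finset.sum_insert (by simp), add_assoc]
    rw [Finset.sup'_congr _ rfl hrw, Ioc_insert hma, Finset.sum_insert (by simp)]
    ac_rfl
  · -- a = m + 1
    have ha : a = m + 1 := by omega
    subst ha
    rw [G_succ hma, G_of_ge _ le_rfl, add_zero]
    rw [sup'_congr_set (show Finset.Icc m (m+1-1) = {m} from by simp), Finset.sup'_singleton]
    simp only [Finset.Ioc_self, Finset.sum_empty, zero_add]
    rw [show Finset.Ioc m (m+1) = {m+1} from by ext x; simp, Finset.sum_singleton]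
    exact max_comm _ _


/-- Multiplying by `xLow n m s` on the right only updates column `m`. -/
lemma tropMul_xLow {n : ℕ} (P : Matrix (Fin n) (Fin n) (WithBot ℝ)) {m : ℕ}
    (hm : m + 1 < n) (s : ℝ) (i j : Fin n) :
    tropMul P (xLow n m s) i j =
      if j.val = m then max (P i j) (P i ⟨m+1, hm⟩ + ↑s) else P i j := by
  unfold tropMul xLow
  apply le_antisymm
  · apply Finset.sup_le
    intro k _
    by_cases hkj : k = j
    · subst hkj
      rw [if_pos rfl, add_zero]
      split
      · exact le_max_left _ _
      · exact le_rfl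
    · rw [if_neg hkj]
      by_cases hcond : k.val = m + 1 ∧ j.val = m
      · rw [if_pos hcond, if_pos hcond.2]
        have hk : k = (⟨m+1, hm⟩ : Fin n) := Fin.ext hcond.1
        subst hk
        exact le_max_right _ _
      · rw [if_neg hcond, WithBot.add_bot]
        exact bot_le
  · split
    · next hj =>
      apply max_le
      · refine le_trans ?_ (Finset.le_sup (Finset.mem_univ j))
        rw [if_pos rfl, add_zero]
      · refine le_trans ?_ (Finset.le_sup (Finset.mem_univ (⟨m+1, hm⟩ : Fin n)))
        rw [if_neg (by intro h; apply absurd (congrArg Fin.val h); simp; omega),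
          if_pos ⟨rfl, hj⟩]
    · refine le_trans ?_ (Finset.le_sup (Finset.mem_univ j))
      rw [if_pos rfl, add_zero]

/-- Multiplying by the diagonal `xDiag n i0 s` on the right. -/
lemma tropMul_xDiag {n : ℕ} (P : Matrix (Fin n) (Fin n) (WithBot ℝ)) (i0 : ℕ) (s : ℝ)
    (a b : Fin n) :
    tropMul P (xDiag n i0 s) a b = P a b + (if b.val = i0 then (↑s : WithBot ℝ) else 0) := by
  unfold tropMul xDiag
  apply le_antisymm
  · apply Finset.sup_le
    intro k _
    by_cases hkb : k = b
    · subst hkb; rw [if_pos rfl]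
    · rw [if_neg hkb, WithBot.add_bot]; exact bot_le
  · refine le_trans ?_ (Finset.le_sup (Finset.mem_univ b))
    rw [if_pos rfl]

/-- The `T`-step indicator inside block `K`. -/
def eSt (n K T j : ℕ) : ℕ := if j + K + 2 < n + T then 1 else 0

/-- The partial product of the elementary factors of `L(W)` after the first `T`
factors of block `K` (blocks `0, …, K-1` completed). -/
noncomputable def Vst (n : ℕ) (W : Matrix (Fin n) (Fin n) ℝ) (K T : ℕ) :
    Matrix (Fin n) (Fin n) (WithBot ℝ) := fun i j =>
  if i = j then 0
  else if j.val < i.val ∧ n ≤ j.val + K + 1 + eSt n K T j.val then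
    ↑(G n W i.val j.val (min j.val (j.val + K + 1 + eSt n K T j.val - n)))
  else ⊥

lemma Vst_zero {n : ℕ} (W : Matrix (Fin n) (Fin n) ℝ) : Vst n W 0 0 = tropId n := by
  funext i j
  unfold Vst tropId
  by_cases hij : i = j
  · simp [hij]
  · rw [if_neg hij, if_neg hij, if_neg]
    rintro ⟨h1, h2⟩
    have := i.isLt
    unfold eSt at h2
    split at h2 <;> omega

lemma Vst_step {n : ℕ} (W : Matrix (Fin n) (Fin n) ℝ) (K T : ℕ) (hK : K + 2 ≤ n) (hT : T ≤ K) :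
    tropMul (Vst n W K T) (xLow n (n - K + T - 2) (wnat n W (n - K + T - 1) T))
      = Vst n W K (T + 1) := by
  set m0 := n - K + T - 2 with hm0
  have hm0n : m0 + 1 < n := by omega
  have hm0T : T ≤ m0 := by omega
  have hrow : n - K + T - 1 = m0 + 1 := by omega
  have em0T : eSt n K T m0 = 0 := by unfold eSt; rw [if_neg (by omega)]
  have em0T1 : eSt n K (T+1) m0 = 1 := by unfold eSt; rw [if_pos (by omega)]
  have em01 : eSt n K T (m0+1) = 0 := by unfold eSt; rw [if_neg (by omega)]
  funext i j
  rw [hrow, tropMul_xLow _ hm0n]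
  by_cases hj : j.val = m0
  · -- the updated column
    rw [if_pos hj]
    by_cases hii : i.val ≤ m0
    · -- rows at or above the pivot: nothing changes
      have hne : i ≠ ⟨m0+1, hm0n⟩ := by
        intro h
        have hv : i.val = m0 + 1 := by rw [h]
        omega
      have hbot : Vst n W K T i ⟨m0+1, hm0n⟩ = ⊥ := by
        unfold Vst
        rw [if_neg hne, if_neg (by rintro ⟨h1, -⟩; simp at h1; omega)]
      rw [hbot, WithBot.bot_add]
      unfold Vst
      by_cases hij : i = j
      · rw [if_pos hij, if_pos hij]; simp
      · rw [if_neg hij, if_neg hij, if_neg (by rintro ⟨h1, -⟩; omega),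
          if_neg (by rintro ⟨h1, -⟩; omega)]
        simp
    · -- rows strictly below the pivot
      push_neg at hii
      have hij : i ≠ j := by intro h; rw [h] at hii; omega
      have hscol : Vst n W K T i ⟨m0+1, hm0n⟩ = ↑(G n W i.val (m0+1) T) := by
        unfold Vst
        by_cases hdiag : i = ⟨m0+1, hm0n⟩
        · rw [if_pos hdiag, hdiag]
          simp only [G_of_ge _ (le_refl (m0+1))]
          norm_num
        · have hne2 : i.val ≠ m0 + 1 := fun h => hdiag (Fin.ext h)
          have hc1 : ((⟨m0+1, hm0n⟩ : Fin n) : ℕ) < i.val := by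
            show m0 + 1 < i.val; omega
          have hc2 : n ≤ ((⟨m0+1, hm0n⟩ : Fin n) : ℕ) + K + 1
              + eSt n K T ((⟨m0+1, hm0n⟩ : Fin n) : ℕ) := by
            show n ≤ m0 + 1 + K + 1 + eSt n K T (m0+1); rw [em01]; omega
          rw [if_neg hdiag, if_pos ⟨hc1, hc2⟩]
          have hmin : min ((⟨m0+1, hm0n⟩ : Fin n) : ℕ)
              (((⟨m0+1, hm0n⟩ : Fin n) : ℕ) + K + 1
                + eSt n K T ((⟨m0+1, hm0n⟩ : Fin n) : ℕ) - n) = T := by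
            show min (m0+1) (m0 + 1 + K + 1 + eSt n K T (m0+1) - n) = T
            rw [em01]; omega
          rw [hmin]
      have hnew : Vst n W K (T+1) i j = ↑(G n W i.val m0 T) := by
        unfold Vst
        have hc : j.val < i.val ∧ n ≤ j.val + K + 1 + eSt n K (T+1) j.val := by
          constructor
          · omega
          · rw [hj, em0T1]; omega
        rw [if_neg hij, if_pos hc, hj]
        have hmin : min m0 (m0 + K + 1 + eSt n K (T+1) m0 - n) = T := by
          rw [em0T1]; omega
        rw [hmin]
      rw [hscol, hnew, ← WithBot.coe_add]
      by_cases hT1 : 1 ≤ T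
      · have hold : Vst n W K T i j = ↑(G n W i.val m0 (T-1)) := by
          unfold Vst
          have hc : j.val < i.val ∧ n ≤ j.val + K + 1 + eSt n K T j.val := by
            constructor
            · omega
            · rw [hj, em0T]; omega
          rw [if_neg hij, if_pos hc, hj]
          have hmin : min m0 (m0 + K + 1 + eSt n K T m0 - n) = T - 1 := by
            rw [em0T]; omega
          rw [hmin]
        rw [hold, ← WithBot.coe_max]
        norm_cast
        have hGs := G_succ (W := W) (n := n) (a := i.val) (m := m0) (v := T - 1)
          (by omega : m0 < i.val)
        rw [show T - 1 + 1 = T by omega] at hGs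
        rw [hGs, add_comm (G n W i.val (m0+1) T)]
      · have hT0 : T = 0 := by omega
        subst hT0
        have hold : Vst n W K 0 i j = ⊥ := by
          unfold Vst
          rw [if_neg hij, if_neg (by rintro ⟨-, h2⟩; rw [hj, em0T] at h2; omega)]
        rw [hold, bot_sup_eq]
        norm_cast
        rw [G_zero (show m0 < i.val by omega), add_comm]
  · -- untouched columns
    rw [if_neg hj]
    have he : eSt n K T j.val = eSt n K (T+1) j.val := by
      unfold eSt; split <;> split <;> first | rfl | omega
    unfold Vst
    rw [he]


lemma Vst_boundary {n : ℕ} (W : Matrix (Fin n) (Fin n) ℝ) (K : ℕ) (hK : K + 2 ≤ n) :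
    Vst n W K (K+1) = Vst n W (K+1) 0 := by
  funext i j
  unfold Vst
  by_cases hij : i = j
  · rw [if_pos hij, if_pos hij]
  · rw [if_neg hij, if_neg hij]
    by_cases hji : j.val < i.val
    · have hjn : j.val + 1 < n := by have := i.isLt; omega
      have e1 : eSt n K (K+1) j.val = 1 := by unfold eSt; rw [if_pos (by omega)]
      by_cases h3 : j.val + K + 3 ≤ n
      · have e2 : eSt n (K+1) 0 j.val = if j.val + K + 3 < n then 1 else 0 := rfl
        rw [if_neg (by rw [e1]; rintro ⟨-, h⟩; omega),
          if_neg (by rw [e2]; rintro ⟨-, h⟩; split at h <;> omega)]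
      · have e2 : eSt n (K+1) 0 j.val = 0 := by unfold eSt; rw [if_neg (by omega)]
        rw [e1, e2]
        by_cases hc : n ≤ j.val + K + 2
        · rw [if_pos ⟨hji, by omega⟩, if_pos ⟨hji, by omega⟩,
            show j.val + K + 1 + 1 - n = j.val + (K+1) + 1 + 0 - n from by omega]
        · rw [if_neg (by rintro ⟨-, h⟩; omega), if_neg (by rintro ⟨-, h⟩; omega)]
    · rw [if_neg (by rintro ⟨h, -⟩; omega), if_neg (by rintro ⟨h, -⟩; omega)]

lemma foldl_block {n : ℕ} (W : Matrix (Fin n) (Fin n) ℝ) (K : ℕ) (hK : K + 2 ≤ n) :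
    ∀ T, T ≤ K + 1 →
    List.foldl tropMul (Vst n W K 0)
      ((List.range T).map fun t => xLow n (n - K + t - 2) (wnat n W (n - K + t - 1) t))
      = Vst n W K T := by
  intro T
  induction T with
  | zero => intro _; simp
  | succ T ih =>
    intro hT
    rw [List.range_succ, List.map_append, List.foldl_append, ih (by omega)]
    simp only [List.map_cons, List.map_nil, List.foldl_cons, List.foldl_nil]
    exact Vst_step W K T hK (by omega)

lemma Lmat_eq_Vst {n : ℕ} (W : Matrix (Fin n) (Fin n) ℝ) :
    Lmat n W = Vst n W (n-1) 0 := by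
  have key : ∀ K, K ≤ n - 1 →
      List.foldl tropMul (tropId n)
        ((List.range K).flatMap fun k => (List.range (k + 1)).map fun t =>
          xLow n (n - k + t - 2) (wnat n W (n - k + t - 1) t))
        = Vst n W K 0 := by
    intro K
    induction K with
    | zero => intro _; simpa using (Vst_zero W).symm
    | succ K ih =>
      intro hK
      rw [List.range_succ, List.flatMap_append, List.foldl_append, ih (by omega)]
      have hK2 : K + 2 ≤ n := by omega
      simp only [List.flatMap_cons, List.flatMap_nil, List.append_nil]
      rw [foldl_block W K hK2 (K+1) le_rfl]
      exact Vst_boundary W K hK2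
  exact key (n-1) le_rfl

/-- The closed form of `L(W)`. -/
noncomputable def Lfin (n : ℕ) (W : Matrix (Fin n) (Fin n) ℝ) :
    Matrix (Fin n) (Fin n) (WithBot ℝ) := fun i j =>
  if i = j then 0 else if j.val < i.val then ↑(G n W i.val j.val j.val) else ⊥

lemma Lmat_eq_Lfin {n : ℕ} (W : Matrix (Fin n) (Fin n) ℝ) : Lmat n W = Lfin n W := by
  rw [Lmat_eq_Vst]
  funext i j
  unfold Vst Lfin
  by_cases hij : i = j
  · rw [if_pos hij, if_pos hij]
  · rw [if_neg hij, if_neg hij]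
    by_cases hji : j.val < i.val
    · have hn : 1 ≤ n := by have := i.isLt; omega
      have e : eSt n (n-1) 0 j.val = 0 := by unfold eSt; rw [if_neg (by omega)]
      rw [if_pos ⟨hji, by rw [e]; omega⟩, if_pos hji]
      rw [show min j.val (j.val + (n-1) + 1 + eSt n (n-1) 0 j.val - n) = j.val from by
        rw [e]; omega]
    · rw [if_neg (by rintro ⟨h, -⟩; omega), if_neg hji]

/-- generic: tropical product with a diagonal matrix on the right -/
lemma tropMul_diagR {n : ℕ} (P : Matrix (Fin n) (Fin n) (WithBot ℝ)) (d : Fin n → WithBot ℝ)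
    (a k : Fin n) :
    tropMul P (fun i j => if i = j then d j else ⊥) a k = P a k + d k := by
  unfold tropMul
  dsimp only
  apply le_antisymm
  · apply Finset.sup_le
    intro x _
    by_cases hx : x = k
    · subst hx; rw [if_pos rfl]
    · rw [if_neg hx, WithBot.add_bot]; exact bot_le
  · refine le_trans ?_ (Finset.le_sup (Finset.mem_univ k))
    rw [if_pos rfl]

/-- The closed form of `D(W)`. -/
noncomputable def Dfin (n : ℕ) (W : Matrix (Fin n) (Fin n) ℝ) :
    Matrix (Fin n) (Fin n) (WithBot ℝ) := fun i j =>
  if i = j then ↑(wnat n W j.val j.val) else ⊥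

lemma Dmat_eq_Dfin {n : ℕ} (W : Matrix (Fin n) (Fin n) ℝ) : Dmat n W = Dfin n W := by
  have key : ∀ T, T ≤ n →
      List.foldl tropMul (tropId n) ((List.range T).map fun i => xDiag n i (wnat n W i i))
        = fun a b => if a = b then (if b.val < T then ↑(wnat n W b.val b.val) else 0) else ⊥ := by
    intro T
    induction T with
    | zero =>
      intro _
      simp only [List.range_zero, List.map_nil, List.foldl_nil]
      funext a b
      unfold tropId
      by_cases hab : a = b
      · simp [hab]
      · simp [hab]
    | succ T ih =>
      intro hT
      rw [List.range_succ, List.map_append, List.foldl_append, ih (by omega)]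
      simp only [List.map_cons, List.map_nil, List.foldl_cons, List.foldl_nil]
      funext a b
      refine Eq.trans (tropMul_xDiag (fun a b : Fin n => if a = b then
        (if b.val < T then ((wnat n W b.val b.val : ℝ) : WithBot ℝ) else 0) else ⊥)
        T (wnat n W T T) a b) ?_
      by_cases hab : a = b
      · rw [if_pos hab, if_pos hab]
        by_cases hbT : b.val = T
        · rw [if_pos hbT, if_neg (by omega), if_pos (by omega), hbT, zero_add]
        · rw [if_neg hbT]
          by_cases hbT2 : b.val < T
          · rw [if_pos hbT2, if_pos (by omega), add_zero]
          · rw [if_neg hbT2, if_neg (by omega), add_zero]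
      · rw [if_neg hab, if_neg hab, WithBot.bot_add]
  have h := key n le_rfl
  unfold Dmat Dfin
  rw [h]
  funext a b
  by_cases hab : a = b
  · rw [if_pos hab, if_pos hab, if_pos b.isLt]
  · rw [if_neg hab, if_neg hab]

/-- The entrywise formula for the tropical transfer matrix. -/
lemma Tmat_formula {n : ℕ} (W : Matrix (Fin n) (Fin n) ℝ) (a b : Fin n) :
    Tmat n W a b = Finset.univ.sup
      (fun k : Fin n => Lfin n W a k + ↑(wnat n W k.val k.val) + Lfin n W.transpose b k) := by
  unfold Tmat
  show Finset.univ.sup (fun k => tropMul (Lmat n W) (Dmat n W) a k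
    + (Lmat n W.transpose).transpose k b) = _
  apply Finset.sup_congr rfl
  intro k _
  rw [Matrix.transpose_apply, Lmat_eq_Lfin, Lmat_eq_Lfin, Dmat_eq_Dfin]
  congr 1
  exact tropMul_diagR (Lfin n W) (fun j => ↑(wnat n W j.val j.val)) a k


lemma wnat_fin {n : ℕ} (W : Matrix (Fin n) (Fin n) ℝ) (a b : Fin n) :
    wnat n W a.val b.val = W a b := by
  unfold wnat
  rw [dif_pos ⟨a.isLt, b.isLt⟩]

lemma wnat_transpose {n : ℕ} (W : Matrix (Fin n) (Fin n) ℝ) (a b : ℕ) :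
    wnat n W.transpose a b = wnat n W b a := by
  unfold wnat
  by_cases h : a < n ∧ b < n
  · rw [dif_pos h, dif_pos ⟨h.2, h.1⟩]; rfl
  · rw [dif_neg h, dif_neg (by tauto)]

/-- strict column parallelogram at `wnat` level -/
lemma sPara_col {n : ℕ} {W : Matrix (Fin n) (Fin n) ℝ} (h : StrictPara n W)
    {r c : ℕ} (h1 : c + 2 ≤ r) (h2 : r < n) : wnat n W r c < wnat n W r (c+1) := by
  have := (h ⟨r, h2⟩ ⟨c, by omega⟩ h1).1
  rwa [← wnat_fin W ⟨r, h2⟩ ⟨c, by omega⟩, ← wnat_fin W ⟨r, h2⟩ ⟨c+1, by omega⟩] at this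

lemma sPara_row {n : ℕ} {W : Matrix (Fin n) (Fin n) ℝ} (h : StrictPara n W)
    {r c : ℕ} (h1 : c + 2 ≤ r) (h2 : r < n) : wnat n W c r < wnat n W (c+1) r := by
  have := (h ⟨r, h2⟩ ⟨c, by omega⟩ h1).2
  rwa [← wnat_fin W ⟨c, by omega⟩ ⟨r, h2⟩, ← wnat_fin W ⟨c+1, by omega⟩ ⟨r, h2⟩] at this

lemma sTrap {n : ℕ} {W : Matrix (Fin n) (Fin n) ℝ} (h : StrictTrapeze n W)
    {i : ℕ} (h1 : 1 ≤ i) (h2 : i < n) :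
    wnat n W i (i-1) + wnat n W (i-1) (i-1) + wnat n W (i-1) i < wnat n W i i := by
  have := h ⟨i, h2⟩ h1
  have hfp : fpred (⟨i, h2⟩ : Fin n) = ⟨i-1, by omega⟩ := rfl
  rw [hfp] at this
  rwa [← wnat_fin W ⟨i, h2⟩ ⟨i-1, by omega⟩, ← wnat_fin W ⟨i-1, by omega⟩ ⟨i-1, by omega⟩,
    ← wnat_fin W ⟨i-1, by omega⟩ ⟨i, h2⟩, ← wnat_fin W ⟨i, h2⟩ ⟨i, h2⟩] at this

lemma paraN_of_strict {n : ℕ} {W : Matrix (Fin n) (Fin n) ℝ} (h : StrictPara n W) :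
    ParaN n W := fun r c h1 h2 => le_of_lt (sPara_col h h1 h2)

lemma paraN_transpose_of_strict {n : ℕ} {W : Matrix (Fin n) (Fin n) ℝ} (h : StrictPara n W) :
    ParaN n W.transpose := by
  intro r c h1 h2
  rw [wnat_transpose, wnat_transpose]
  exact le_of_lt (sPara_row h h1 h2)

/-- the weight of the path through the planar network meeting the diagonal at `k` -/
noncomputable def rT (n : ℕ) (W : Matrix (Fin n) (Fin n) ℝ) (a b k : ℕ) : ℝ :=
  G n W a k k + wnat n W k k + G n W.transpose b k k

lemma rT_eq_sums {n : ℕ} {W : Matrix (Fin n) (Fin n) ℝ}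
    (hp : ParaN n W) (hp' : ParaN n W.transpose) {a b k : ℕ} (ha : a < n) (hb : b < n) :
    rT n W a b k = (∑ t ∈ Finset.Ioc k a, wnat n W t k) + wnat n W k k
      + ∑ t ∈ Finset.Ioc k b, wnat n W k t := by
  unfold rT
  rw [G_eq_sum hp ha le_rfl, G_eq_sum hp' hb le_rfl]
  congr 1
  apply Finset.sum_congr rfl
  intro t _
  rw [wnat_transpose]

lemma rT_step {n : ℕ} {W : Matrix (Fin n) (Fin n) ℝ}
    (hpara : StrictPara n W) (htrap : StrictTrapeze n W) {a b k : ℕ}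
    (ha : a < n) (hb : b < n) (hka : k < a) (hkb : k < b) :
    rT n W a b k < rT n W a b (k+1) := by
  have hp := paraN_of_strict hpara
  have hp' := paraN_transpose_of_strict hpara
  rw [rT_eq_sums hp hp' ha hb, rT_eq_sums hp hp' ha hb]
  rw [Ioc_insert hka, Finset.sum_insert (by simp), Ioc_insert hkb, Finset.sum_insert (by simp)]
  have h1 : (∑ t ∈ Finset.Ioc (k+1) a, wnat n W t k)
      ≤ ∑ t ∈ Finset.Ioc (k+1) a, wnat n W t (k+1) := by
    apply Finset.sum_le_sum
    intro t ht; simp only [Finset.mem_Ioc] at ht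
    exact le_of_lt (sPara_col hpara (by omega) (by omega))
  have h2 : (∑ t ∈ Finset.Ioc (k+1) b, wnat n W k t)
      ≤ ∑ t ∈ Finset.Ioc (k+1) b, wnat n W (k+1) t := by
    apply Finset.sum_le_sum
    intro t ht; simp only [Finset.mem_Ioc] at ht
    exact le_of_lt (sPara_row hpara (by omega) (by omega))
  have h3 : wnat n W (k+1) k + wnat n W k k + wnat n W k (k+1) < wnat n W (k+1) (k+1) := by
    have := sTrap htrap (i := k+1) (by omega) (by omega)
    simpa using this
  linarith

lemma step_strict_lt {v : ℕ} (f : ℕ → ℝ) (hm : ∀ c, c + 1 ≤ v → f c < f (c+1)) :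
    ∀ c, c < v → f c < f v := by
  have key : ∀ k c, c + k + 1 ≤ v → f c < f (c + k + 1) := by
    intro k
    induction k with
    | zero => intro c h; simpa using hm c (by omega)
    | succ k ih =>
      intro c h
      calc f c < f (c + k + 1) := ih c (by omega)
        _ < f (c + k + 1 + 1) := hm _ (by omega)
  intro c hc
  have h2 := key (v - c - 1) c (by omega)
  rwa [show c + (v - c - 1) + 1 = v from by omega] at h2

lemma rT_lt_min {n : ℕ} {W : Matrix (Fin n) (Fin n) ℝ}
    (hpara : StrictPara n W) (htrap : StrictTrapeze n W) {a b k : ℕ}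
    (ha : a < n) (hb : b < n) (hk : k < min a b) :
    rT n W a b k < rT n W a b (min a b) := by
  refine step_strict_lt (f := rT n W a b) ?_ k hk
  intro c hc
  exact rT_step hpara htrap ha hb (by omega) (by omega)


lemma Lfin_eq {n : ℕ} (W : Matrix (Fin n) (Fin n) ℝ) (a k : Fin n) :
    Lfin n W a k = if k.val ≤ a.val then ↑(G n W a.val k.val k.val) else ⊥ := by
  unfold Lfin
  by_cases hak : a = k
  · rw [if_pos hak, hak, if_pos le_rfl, G_of_ge _ le_rfl]
    norm_num
  · rw [if_neg hak]
    by_cases hlt : k.val < a.val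
    · rw [if_pos hlt, if_pos (by omega)]
    · rw [if_neg hlt, if_neg (by
        intro h
        exact hak (Fin.ext (by omega)))]

/-- the `k`-th term in the transfer-matrix entry formula -/
noncomputable def TermF (n : ℕ) (W : Matrix (Fin n) (Fin n) ℝ) (a b k : Fin n) : WithBot ℝ :=
  Lfin n W a k + ↑(wnat n W k.val k.val) + Lfin n W.transpose b k

lemma Tmat_formula' {n : ℕ} (W : Matrix (Fin n) (Fin n) ℝ) (a b : Fin n) :
    Tmat n W a b = Finset.univ.sup (TermF n W a b) := Tmat_formula W a b

lemma TermF_eq {n : ℕ} (W : Matrix (Fin n) (Fin n) ℝ) (a b k : Fin n) :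
    TermF n W a b k = if k.val ≤ a.val ∧ k.val ≤ b.val
      then ↑(rT n W a.val b.val k.val) else ⊥ := by
  unfold TermF
  rw [Lfin_eq, Lfin_eq]
  by_cases h1 : k.val ≤ a.val
  · by_cases h2 : k.val ≤ b.val
    · rw [if_pos h1, if_pos h2, if_pos ⟨h1, h2⟩]
      unfold rT
      push_cast
      rfl
    · rw [if_pos h1, if_neg h2, if_neg (by tauto), WithBot.add_bot]
  · rw [if_neg h1, WithBot.bot_add, WithBot.bot_add,
      if_neg (show ¬(k.val ≤ a.val ∧ k.val ≤ b.val) from fun h => h1 h.1)]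

lemma Tmat_entry {n : ℕ} {W : Matrix (Fin n) (Fin n) ℝ}
    (hpara : StrictPara n W) (htrap : StrictTrapeze n W) (a b : Fin n) :
    Tmat n W a b = ↑(rT n W a.val b.val (min a.val b.val)) := by
  rw [Tmat_formula']
  apply le_antisymm
  · apply Finset.sup_le
    intro k _
    rw [TermF_eq]
    split
    · next h =>
      rw [WithBot.coe_le_coe]
      rcases Nat.lt_or_ge k.val (min a.val b.val) with hlt | hge
      · exact le_of_lt (rT_lt_min hpara htrap a.isLt b.isLt hlt)
      · have : k.val = min a.val b.val := by omega
        rw [this]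
    · exact bot_le
  · refine le_trans ?_ (Finset.le_sup
      (Finset.mem_univ (⟨min a.val b.val, by have := a.isLt; omega⟩ : Fin n)))
    rw [TermF_eq]
    rw [if_pos ⟨by simp, by simp⟩]

lemma sum_Icc_val {n : ℕ} (x y : Fin n) (f : Fin n → ℝ) (g : ℕ → ℝ)
    (h : ∀ t : Fin n, t ∈ Finset.Icc x y → g t.val = f t) :
    ∑ t ∈ Finset.Icc x y, f t = ∑ t ∈ Finset.Icc x.val y.val, g t := by
  rw [← Fin.map_valEmbedding_Icc, Finset.sum_map]
  exact (Finset.sum_congr rfl h).symm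

lemma rT_min_eq_psi {n : ℕ} {W : Matrix (Fin n) (Fin n) ℝ}
    (hp : ParaN n W) (hp' : ParaN n W.transpose) (a b : Fin n) :
    rT n W a.val b.val (min a.val b.val) = psi n W a b := by
  rw [rT_eq_sums hp hp' a.isLt b.isLt]
  unfold psi
  by_cases hab : a ≤ b
  · have hv : a.val ≤ b.val := hab
    rw [if_pos hab]
    have hmin : min a.val b.val = a.val := by omega
    rw [hmin, Finset.Ioc_self, Finset.sum_empty, zero_add]
    rw [sum_Icc_val a b (fun t => W a t) (fun t => wnat n W a.val t)
      (fun t _ => wnat_fin W a t)]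
    rw [Finset.Icc_eq_cons_Ioc hv, Finset.sum_cons]
  · have hv : b.val ≤ a.val := by
      have : b ≤ a := le_of_lt (not_le.mp hab)
      exact this
    rw [if_neg hab]
    have hmin : min a.val b.val = b.val := by omega
    rw [hmin, Finset.Ioc_self, Finset.sum_empty, add_zero]
    rw [sum_Icc_val b a (fun t => W t b) (fun t => wnat n W t b.val)
      (fun t _ => wnat_fin W t b)]
    rw [Finset.Icc_eq_cons_Ioc hv, Finset.sum_cons, add_comm]

/-- Under the strict inequalities, the transfer matrix collapses to `ψ(W)`. -/
lemma Tmat_eq_psi {n : ℕ} {W : Matrix (Fin n) (Fin n) ℝ}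
    (hpara : StrictPara n W) (htrap : StrictTrapeze n W) :
    Tmat n W = (psi n W).map ((↑) : ℝ → WithBot ℝ) := by
  funext a b
  rw [Tmat_entry hpara htrap,
    rT_min_eq_psi (paraN_of_strict hpara) (paraN_transpose_of_strict hpara)]
  rfl


lemma strictMono_pair {α} [Preorder α] {x y : α} (h : x < y) : StrictMono ![x, y] := by
  intro a b hab
  fin_cases a <;> fin_cases b <;>
    simp_all [Matrix.cons_val_zero, Matrix.cons_val_one, Matrix.head_cons]

lemma minor2 {n : ℕ} {A : Matrix (Fin n) (Fin n) ℝ} (hA : IsTropTP n A)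
    {r0 r1 c0 c1 : Fin n} (hr : r0 < r1) (hc : c0 < c1) :
    A r0 c1 + A r1 c0 < A r0 c0 + A r1 c1 := by
  have h := hA 2 le_rfl ![r0, r1] ![c0, c1] (strictMono_pair hr) (strictMono_pair hc)
  unfold tropPermSup at h
  rw [show (Finset.univ.filter fun σ : Equiv.Perm (Fin 2) => Equiv.Perm.sign σ = -1)
      = {Equiv.swap 0 1} from by decide,
    show (Finset.univ.filter fun σ : Equiv.Perm (Fin 2) => Equiv.Perm.sign σ = 1)
      = {1} from by decide,
    Finset.sup_singleton, Finset.sup_singleton, Fin.sum_univ_two, Fin.sum_univ_two] at h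
  simp only [Equiv.swap_apply_left, Equiv.swap_apply_right, Equiv.Perm.one_apply,
    Matrix.submatrix_apply, Matrix.map_apply, Matrix.cons_val_zero, Matrix.cons_val_one,
    Matrix.head_cons] at h
  rw [← WithBot.coe_add, ← WithBot.coe_add, WithBot.coe_lt_coe] at h
  linarith

lemma fin_lt_of_val {n : ℕ} {x y : Fin n} (h : x.val < y.val) : x < y := h

lemma phi_sPara {n : ℕ} {A : Matrix (Fin n) (Fin n) ℝ} (hA : IsTropTP n A) :
    StrictPara n (phi n A) := by
  intro i j h
  have hin := i.isLt
  have hji : (j:ℕ) < (i:ℕ) := by omega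
  constructor
  · have e1 : phi n A i j = A i j - A (fpred i) j := by
      unfold phi
      rw [if_neg (fun hh => by rw [hh] at hji; omega),
        if_neg (fun hh => by have : (i:ℕ) < j := hh; omega)]
    have e2 : phi n A i ⟨j.val+1, by omega⟩ = A i ⟨j.val+1, by omega⟩
        - A (fpred i) ⟨j.val+1, by omega⟩ := by
      unfold phi
      rw [if_neg (fun hh => by have := congrArg Fin.val hh; simp at this; omega),
        if_neg (fun hh => by have : (i:ℕ) < j.val+1 := hh; omega)]
    rw [e1, e2]
    have hm := minor2 hA (show fpred i < i from fin_lt_of_val (by show i.val - 1 < i.val; omega))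
      (show j < ⟨j.val+1, by omega⟩ from fin_lt_of_val (by show j.val < j.val + 1; omega))
    linarith
  · have e1 : phi n A j i = A j i - A j (fpred i) := by
      unfold phi
      rw [if_neg (fun hh => by rw [hh] at hji; omega), if_pos (show j < i from fin_lt_of_val hji)]
    have e2 : phi n A ⟨j.val+1, by omega⟩ i = A ⟨j.val+1, by omega⟩ i
        - A ⟨j.val+1, by omega⟩ (fpred i) := by
      unfold phi
      rw [if_neg (fun hh => by have := congrArg Fin.val hh; simp at this; omega),
        if_pos (fin_lt_of_val (by show j.val + 1 < i.val; omega))]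
    rw [e1, e2]
    have hm := minor2 hA
      (show j < ⟨j.val+1, by omega⟩ from fin_lt_of_val (by show j.val < j.val + 1; omega))
      (show fpred i < i from fin_lt_of_val (by show i.val - 1 < i.val; omega))
    linarith

lemma phi_sTrap {n : ℕ} {A : Matrix (Fin n) (Fin n) ℝ} (hA : IsTropTP n A) :
    StrictTrapeze n (phi n A) := by
  intro i hi
  have hpi : fpred i < i := fin_lt_of_val (by show i.val - 1 < i.val; omega)
  have hpne : fpred i ≠ i := ne_of_lt hpi
  have e1 : phi n A i (fpred i) = A i (fpred i) - A (fpred i) (fpred i) := by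
    unfold phi
    rw [if_neg (fun hh => hpne hh.symm), if_neg (fun hh => absurd (lt_trans hh hpi) (lt_irrefl i))]
  have e2 : phi n A (fpred i) (fpred i) = A (fpred i) (fpred i) := by
    unfold phi; rw [if_pos rfl]
  have e3 : phi n A (fpred i) i = A (fpred i) i - A (fpred i) (fpred i) := by
    unfold phi
    rw [if_neg hpne, if_pos hpi]
  have e4 : phi n A i i = A i i := by unfold phi; rw [if_pos rfl]
  rw [e1, e2, e3, e4]
  have hm := minor2 hA hpi hpi
  linarith

lemma telescope (h : ℕ → ℝ) (u : ℕ) : ∀ v, u ≤ v →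
    h u + ∑ t ∈ Finset.Ioc u v, (h t - h (t-1)) = h v := by
  intro v hv
  induction v, hv using Nat.le_induction with
  | base => simp
  | succ v hv ih =>
    rw [Finset.sum_Ioc_succ_top hv, ← add_assoc, ih]
    simp

lemma psi_phi {n : ℕ} (A : Matrix (Fin n) (Fin n) ℝ) : psi n (phi n A) = A := by
  funext i j
  unfold psi
  by_cases hij : i ≤ j
  · rw [if_pos hij]
    have hv : i.val ≤ j.val := hij
    rw [sum_Icc_val i j (fun t => phi n A i t) (fun t => wnat n (phi n A) i.val t)
      (fun t _ => wnat_fin (phi n A) i t)]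
    rw [Finset.Icc_eq_cons_Ioc hv, Finset.sum_cons]
    have hcong : ∀ t ∈ Finset.Ioc i.val j.val,
        wnat n (phi n A) i.val t = wnat n A i.val t - wnat n A i.val (t-1) := by
      intro t ht
      simp only [Finset.mem_Ioc] at ht
      have htn : t < n := lt_of_le_of_lt ht.2 j.isLt
      rw [show wnat n (phi n A) i.val t = phi n A i ⟨t, htn⟩ from wnat_fin (phi n A) i ⟨t, htn⟩,
        show wnat n A i.val t = A i ⟨t, htn⟩ from wnat_fin A i ⟨t, htn⟩,
        show wnat n A i.val (t-1) = A i ⟨t-1, by omega⟩ from wnat_fin A i ⟨t-1, by omega⟩]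
      unfold phi
      rw [if_neg (fun hh => by have := congrArg Fin.val hh; simp at this; omega),
        if_pos (fin_lt_of_val (by show i.val < t; omega))]
      rfl
    rw [Finset.sum_congr rfl hcong,
      show wnat n (phi n A) i.val i.val = A i i from by
        rw [wnat_fin (phi n A) i i]; unfold phi; rw [if_pos rfl]]
    have := telescope (fun t => wnat n A i.val t) i.val j.val hv
    rw [show (A i i : ℝ) = wnat n A i.val i.val from (wnat_fin A i i).symm, this,
      wnat_fin A i j]
  · rw [if_neg hij]
    have hv : j.val ≤ i.val := by
      have : j ≤ i := le_of_lt (not_le.mp hij)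
      exact this
    rw [sum_Icc_val j i (fun t => phi n A t j) (fun t => wnat n (phi n A) t j.val)
      (fun t _ => wnat_fin (phi n A) t j)]
    rw [Finset.Icc_eq_cons_Ioc hv, Finset.sum_cons]
    have hcong : ∀ t ∈ Finset.Ioc j.val i.val,
        wnat n (phi n A) t j.val = wnat n A t j.val - wnat n A (t-1) j.val := by
      intro t ht
      simp only [Finset.mem_Ioc] at ht
      have htn : t < n := lt_of_le_of_lt ht.2 i.isLt
      rw [show wnat n (phi n A) t j.val = phi n A ⟨t, htn⟩ j from wnat_fin (phi n A) ⟨t, htn⟩ j,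
        show wnat n A t j.val = A ⟨t, htn⟩ j from wnat_fin A ⟨t, htn⟩ j,
        show wnat n A (t-1) j.val = A ⟨t-1, by omega⟩ j from wnat_fin A ⟨t-1, by omega⟩ j]
      unfold phi
      rw [if_neg (fun hh => by have := congrArg Fin.val hh; simp at this; omega),
        if_neg (fun hh => by have : (t:ℕ) < j.val := hh; omega)]
      rfl
    rw [Finset.sum_congr rfl hcong,
      show wnat n (phi n A) j.val j.val = A j j from by
        rw [wnat_fin (phi n A) j j]; unfold phi; rw [if_pos rfl]]
    have := telescope (fun t => wnat n A t j.val) j.val i.val hv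
    rw [show (A j j : ℝ) = wnat n A j.val j.val from (wnat_fin A j j).symm, this,
      wnat_fin A i j]

/-- Existence part. -/
lemma Tmat_phi {n : ℕ} {A : Matrix (Fin n) (Fin n) ℝ} (hA : IsTropTP n A) :
    Tmat n (phi n A) = A.map ((↑) : ℝ → WithBot ℝ) := by
  rw [Tmat_eq_psi (phi_sPara hA) (phi_sTrap hA), psi_phi]



lemma G_cap0 {n : ℕ} {U : Matrix (Fin n) (Fin n) ℝ} {a : ℕ} : ∀ {m : ℕ},
    G n U a m 0 = ∑ t ∈ Finset.Ioc m a, wnat n U t 0 := by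
  intro m
  induction' hd : a - m using Nat.strong_induction_on with d ih generalizing m
  by_cases h : m < a
  · rw [G_zero h, ih (a - (m+1)) (by omega) rfl, Ioc_insert h, Finset.sum_insert (by simp)]
  · rw [G_of_ge _ (by omega), Finset.Ioc_eq_empty (by omega), Finset.sum_empty]

/-- sum along a column, from the border -/
noncomputable def SU (n : ℕ) (U : Matrix (Fin n) (Fin n) ℝ) (a b : ℕ) : ℝ :=
  ∑ t ∈ Finset.Ico b a, wnat n U t b

lemma sum_col {n : ℕ} {U : Matrix (Fin n) (Fin n) ℝ} {a b : ℕ} (hba : b < a) :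
    wnat n U b b + ∑ t ∈ Finset.Ioc b a, wnat n U t b = wnat n U a b + SU n U a b := by
  have h1 : ∑ t ∈ Finset.Icc b a, wnat n U t b
      = wnat n U b b + ∑ t ∈ Finset.Ioc b a, wnat n U t b := by
    rw [Finset.Icc_eq_cons_Ioc (by omega), Finset.sum_cons]
  have h2 : ∑ t ∈ Finset.Icc b a, wnat n U t b = SU n U a b + wnat n U a b := by
    rw [← Finset.Ico_add_one_right_eq_Icc, Finset.sum_Ico_succ_top (by omega)]
    rfl
  rw [← h1, h2, add_comm]

lemma TermF_b {n : ℕ} (U : Matrix (Fin n) (Fin n) ℝ) (a b : Fin n) (hba : b.val ≤ a.val) :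
    TermF n U a b b = ↑(G n U a.val b.val b.val + wnat n U b.val b.val) := by
  rw [TermF_eq, if_pos ⟨hba, le_rfl⟩]
  unfold rT
  rw [G_of_ge _ le_rfl, add_zero]

lemma TermF_gt {n : ℕ} (U : Matrix (Fin n) (Fin n) ℝ) (a b k : Fin n) (h : b.val < k.val) :
    TermF n U a b k = ⊥ := by
  rw [TermF_eq, if_neg (by omega)]

lemma Tmat_split0 {n : ℕ} (U : Matrix (Fin n) (Fin n) ℝ) (a b : Fin n)
    (hba : b.val < a.val) (hb0 : b.val = 0) :
    Tmat n U a b = ↑(U a b + SU n U a.val b.val) := by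
  have hval : G n U a.val b.val b.val + wnat n U b.val b.val
      = U a b + SU n U a.val b.val := by
    rw [hb0, G_cap0, ← hb0]
    have := sum_col (n := n) (U := U) hba
    rw [show wnat n U a.val b.val = U a b from wnat_fin U a b] at this
    linarith
  rw [Tmat_formula']
  apply le_antisymm
  · apply Finset.sup_le
    intro k _
    rcases Nat.lt_or_ge b.val k.val with h | h
    · rw [TermF_gt U a b k h]; exact bot_le
    · have hk : k = b := Fin.ext (by omega)
      subst hk
      rw [TermF_b U a k (by omega), hval]
  · refine le_trans ?_ (Finset.le_sup (Finset.mem_univ b))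
    rw [TermF_b U a b (by omega), hval]

lemma Tmat_split1 {n : ℕ} (U : Matrix (Fin n) (Fin n) ℝ) (a b : Fin n)
    (hba : b.val < a.val) (hb1 : 1 ≤ b.val) :
    Tmat n U a b = (↑(U a b + SU n U a.val b.val) : WithBot ℝ)
      ⊔ (((Finset.univ.filter (fun k : Fin n => k.val < b.val)).sup (TermF n U a b))
      ⊔ ↑(wnat n U b.val b.val + (Finset.Icc b.val (a.val-1)).sup'
          (Finset.nonempty_Icc.mpr (by omega))
          (fun r => (∑ t ∈ Finset.Ioc b.val r, wnat n U t b.val) + G n U a.val r (b.val-1)))) := by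
  have hGs := G_split (n := n) (W := U) (a := a.val) (m := b.val) (v := b.val - 1) hba
  rw [show b.val - 1 + 1 = b.val from by omega] at hGs
  have hTb : TermF n U a b b = (↑(U a b + SU n U a.val b.val) : WithBot ℝ)
      ⊔ ↑(wnat n U b.val b.val + (Finset.Icc b.val (a.val-1)).sup'
          (Finset.nonempty_Icc.mpr (by omega))
          (fun r => (∑ t ∈ Finset.Ioc b.val r, wnat n U t b.val) + G n U a.val r (b.val-1))) := by
    rw [TermF_b U a b (by omega), hGs]
    rw [show (max (∑ t ∈ Finset.Ioc b.val a.val, wnat n U t b.val)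
        ((Finset.Icc b.val (a.val-1)).sup' (Finset.nonempty_Icc.mpr (by omega))
          (fun r => (∑ t ∈ Finset.Ioc b.val r, wnat n U t b.val) + G n U a.val r (b.val-1))))
        + wnat n U b.val b.val
      = max ((∑ t ∈ Finset.Ioc b.val a.val, wnat n U t b.val) + wnat n U b.val b.val)
        (((Finset.Icc b.val (a.val-1)).sup' (Finset.nonempty_Icc.mpr (by omega))
          (fun r => (∑ t ∈ Finset.Ioc b.val r, wnat n U t b.val) + G n U a.val r (b.val-1)))
          + wnat n U b.val b.val) from by
      rw [← max_add_add_right]]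
    rw [WithBot.coe_max]
    congr 2
    · have := sum_col (n := n) (U := U) (a := a.val) (b := b.val) hba
      rw [show wnat n U a.val b.val = U a b from wnat_fin U a b] at this
      linarith
    · linarith
  rw [Tmat_formula']
  apply le_antisymm
  · apply Finset.sup_le
    intro k _
    rcases Nat.lt_or_ge b.val k.val with h | h
    · rw [TermF_gt U a b k h]; exact bot_le
    · rcases Nat.lt_or_ge k.val b.val with h2 | h2
      · exact le_sup_of_le_right (le_sup_of_le_left
          (Finset.le_sup (Finset.mem_filter.mpr ⟨Finset.mem_univ k, h2⟩)))
      · have hk : k = b := Fin.ext (by omega)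
        subst hk
        rw [hTb]
        exact sup_le le_sup_left (le_sup_of_le_right le_sup_right)
  · apply sup_le
    · refine le_trans ?_ (Finset.le_sup (Finset.mem_univ b))
      rw [hTb]; exact le_sup_left
    · apply sup_le
      · exact Finset.sup_le fun k hk => Finset.le_sup (Finset.mem_univ k)
      · refine le_trans ?_ (Finset.le_sup (Finset.mem_univ b))
        rw [hTb]; exact le_sup_right

lemma Tmat_transpose {n : ℕ} (U : Matrix (Fin n) (Fin n) ℝ) (a b : Fin n) :
    Tmat n U.transpose b a = Tmat n U a b := by
  rw [Tmat_formula', Tmat_formula']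
  apply Finset.sup_congr rfl
  intro k _
  unfold TermF
  rw [Matrix.transpose_transpose, wnat_transpose]
  have : ∀ x y z : WithBot ℝ, x + y + z = z + y + x := by
    intro x y z
    rw [add_comm x y, add_comm _ z, ← add_assoc]
  exact this _ _ _

lemma sPara_transpose {n : ℕ} {V : Matrix (Fin n) (Fin n) ℝ} (h : StrictPara n V) :
    StrictPara n V.transpose := by
  intro i j hij
  exact ⟨(h i j hij).2, (h i j hij).1⟩

lemma sTrap_transpose {n : ℕ} {V : Matrix (Fin n) (Fin n) ℝ} (h : StrictTrapeze n V) :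
    StrictTrapeze n V.transpose := by
  intro i hi
  have := h i hi
  show V (fpred i) i + V (fpred i) (fpred i) + V i (fpred i) < V i i
  linarith

lemma sup_cancel {x y M : WithBot ℝ} (h : x ⊔ M = y) (hM : M < y) : x = y := by
  rcases le_total x M with hx | hx
  · rw [sup_eq_right.2 hx] at h
    exact absurd (h ▸ hM) (lt_irrefl _)
  · rw [sup_eq_left.2 hx] at h
    exact h



lemma wnat_agree {n : ℕ} {W V : Matrix (Fin n) (Fin n) ℝ} {bound : ℕ}
    (hag : ∀ t c : Fin n, min t.val c.val * n + max t.val c.val < bound → W t c = V t c)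
    {t c : ℕ} (ht : t < n) (hc : c < n) (hμ : min t c * n + max t c < bound) :
    wnat n W t c = wnat n V t c := by
  have h := hag ⟨t, ht⟩ ⟨c, hc⟩ hμ
  unfold wnat
  rw [dif_pos ⟨ht, hc⟩, dif_pos ⟨ht, hc⟩]
  exact h

lemma mu_lt {n b c t : ℕ} (hc : c + 1 ≤ b) (ht : t < n) : c * n + t < b * n := by
  have h1 : (c+1) * n ≤ b * n := Nat.mul_le_mul_right n hc
  rw [add_one_mul] at h1
  omega

lemma rT_b_eq {n : ℕ} {V : Matrix (Fin n) (Fin n) ℝ} (hp : ParaN n V)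
    (a b : Fin n) (hba : b.val ≤ a.val) :
    rT n V a.val b.val b.val = V a b + SU n V a.val b.val := by
  unfold rT
  rw [G_of_ge _ le_rfl, add_zero, G_eq_sum hp a.isLt le_rfl]
  rcases Nat.eq_or_lt_of_le hba with h | h
  · have hab : a = b := Fin.ext h.symm
    subst hab
    unfold SU
    rw [Finset.Ioc_self, Finset.sum_empty, zero_add, Finset.Ico_self, Finset.sum_empty, add_zero]
    exact wnat_fin V a a
  · have := sum_col (n := n) (U := V) (a := a.val) (b := b.val) h
    rw [show wnat n V a.val b.val = V a b from wnat_fin V a b] at this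
    linarith

lemma TermF_congr {n : ℕ} {W V : Matrix (Fin n) (Fin n) ℝ} {bound : ℕ}
    (hag : ∀ t c : Fin n, min t.val c.val * n + max t.val c.val < bound → W t c = V t c)
    {a b k : Fin n} (hk : k.val < b.val) (hbound : b.val * n ≤ bound) :
    TermF n W a b k = TermF n V a b k := by
  rw [TermF_eq, TermF_eq]
  by_cases hcond : k.val ≤ a.val ∧ k.val ≤ b.val
  · rw [if_pos hcond, if_pos hcond]
    have e1 : G n W a.val k.val k.val = G n V a.val k.val k.val := by
      apply G_congr
      intro t c htk hta hck
      have htn : t < n := lt_of_le_of_lt hta a.isLt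
      have hcn : c < n := by have := k.isLt; omega
      apply wnat_agree hag htn hcn
      have hmin : min t c = c := by omega
      have hmax : max t c = t := by omega
      rw [hmin, hmax]
      exact lt_of_lt_of_le (mu_lt (by omega) htn) hbound
    have e2 : G n W.transpose b.val k.val k.val = G n V.transpose b.val k.val k.val := by
      apply G_congr
      intro t c htk htb hck
      have htn : t < n := lt_of_le_of_lt htb b.isLt
      have hcn : c < n := by have := k.isLt; omega
      rw [wnat_transpose, wnat_transpose]
      apply wnat_agree hag hcn htn
      have hmin : min c t = c := by omega
      have hmax : max c t = t := by omega
      rw [hmin, hmax]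
      exact lt_of_lt_of_le (mu_lt (by omega) htn) hbound
    have e3 : wnat n W k.val k.val = wnat n V k.val k.val := by
      apply wnat_agree hag k.isLt k.isLt
      have : min k.val k.val = k.val := by omega
      rw [this, max_self]
      exact lt_of_lt_of_le (mu_lt (by omega) k.isLt) hbound
    unfold rT
    rw [e1, e2, e3]
  · rw [if_neg hcond, if_neg hcond]

lemma M1_lt {n : ℕ} {V : Matrix (Fin n) (Fin n) ℝ}
    (hpV : StrictPara n V) (htV : StrictTrapeze n V) (a b : Fin n) (hba : b.val ≤ a.val) :
    (Finset.univ.filter (fun k : Fin n => k.val < b.val)).sup (TermF n V a b)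
      < ↑(V a b + SU n V a.val b.val) := by
  rw [Finset.sup_lt_iff (WithBot.bot_lt_coe _)]
  intro k hk
  rw [Finset.mem_filter] at hk
  rw [TermF_eq]
  split
  · rw [WithBot.coe_lt_coe, ← rT_b_eq (paraN_of_strict hpV) a b hba]
    have hmin : min a.val b.val = b.val := by omega
    have := rT_lt_min hpV htV a.isLt b.isLt (k := k.val) (by omega)
    rwa [hmin] at this
  · exact WithBot.bot_lt_coe _

lemma dev_lt {n : ℕ} {V : Matrix (Fin n) (Fin n) ℝ}
    (hpV : StrictPara n V) (a b : Fin n) (hba : b.val < a.val) (hb1 : 1 ≤ b.val) :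
    wnat n V b.val b.val + (Finset.Icc b.val (a.val-1)).sup'
        (Finset.nonempty_Icc.mpr (by omega))
        (fun r => (∑ t ∈ Finset.Ioc b.val r, wnat n V t b.val) + G n V a.val r (b.val-1))
      < V a b + SU n V a.val b.val := by
  have hsum := sum_col (n := n) (U := V) (a := a.val) (b := b.val) hba
  rw [show wnat n V a.val b.val = V a b from wnat_fin V a b] at hsum
  have hsup : (Finset.Icc b.val (a.val-1)).sup'
      (Finset.nonempty_Icc.mpr (by omega))
      (fun r => (∑ t ∈ Finset.Ioc b.val r, wnat n V t b.val) + G n V a.val r (b.val-1))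
      < ∑ t ∈ Finset.Ioc b.val a.val, wnat n V t b.val := by
    rw [Finset.sup'_lt_iff]
    intro r hr
    rw [Finset.mem_Icc] at hr
    have hG : G n V a.val r (b.val-1) = ∑ t ∈ Finset.Ioc r a.val, wnat n V t (b.val-1) :=
      G_eq_sum (paraN_of_strict hpV) a.isLt (by omega)
    have hlt : (∑ t ∈ Finset.Ioc r a.val, wnat n V t (b.val-1))
        < ∑ t ∈ Finset.Ioc r a.val, wnat n V t b.val := by
      apply Finset.sum_lt_sum_of_nonempty (by rw [Finset.nonempty_Ioc]; omega)
      intro t ht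
      rw [Finset.mem_Ioc] at ht
      have := sPara_col hpV (r := t) (c := b.val - 1) (by omega) (by omega)
      rwa [show b.val - 1 + 1 = b.val from by omega] at this
    have hcat : (∑ t ∈ Finset.Ioc b.val r, wnat n V t b.val)
        + ∑ t ∈ Finset.Ioc r a.val, wnat n V t b.val
        = ∑ t ∈ Finset.Ioc b.val a.val, wnat n V t b.val :=
      Finset.sum_Ioc_consecutive _ (by omega) (by omega)
    rw [hG]
    linarith
  linarith



lemma uniq_off {n : ℕ} {W V : Matrix (Fin n) (Fin n) ℝ}
    (hpV : StrictPara n V) (htV : StrictTrapeze n V) (a b : Fin n) (hba : b.val < a.val)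
    (hag : ∀ t c : Fin n, min t.val c.val * n + max t.val c.val < b.val * n + a.val → W t c = V t c)
    (hT : Tmat n W a b = Tmat n V a b) : W a b = V a b := by
  have hSU : SU n W a.val b.val = SU n V a.val b.val := by
    unfold SU
    apply Finset.sum_congr rfl
    intro t ht
    rw [Finset.mem_Ico] at ht
    apply wnat_agree hag (lt_trans ht.2 a.isLt) b.isLt
    rw [show min t b.val = b.val from by omega, show max t b.val = t from by omega]
    exact Nat.add_lt_add_left ht.2 _
  by_cases hb1 : 1 ≤ b.val
  · rw [Tmat_split1 W a b hba hb1, Tmat_split1 V a b hba hb1] at hT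
    have hM1 : (Finset.univ.filter (fun k : Fin n => k.val < b.val)).sup (TermF n W a b)
        = (Finset.univ.filter (fun k : Fin n => k.val < b.val)).sup (TermF n V a b) := by
      apply Finset.sup_congr rfl
      intro k hk
      rw [Finset.mem_filter] at hk
      exact TermF_congr hag hk.2 (Nat.le_add_right _ _)
    have hw : wnat n W b.val b.val = wnat n V b.val b.val := by
      apply wnat_agree hag b.isLt b.isLt
      rw [min_self, max_self]
      exact Nat.add_lt_add_left hba _
    have hdev : (Finset.Icc b.val (a.val-1)).sup' (Finset.nonempty_Icc.mpr (by omega))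
          (fun r => (∑ t ∈ Finset.Ioc b.val r, wnat n W t b.val) + G n W a.val r (b.val-1))
        = (Finset.Icc b.val (a.val-1)).sup' (Finset.nonempty_Icc.mpr (by omega))
          (fun r => (∑ t ∈ Finset.Ioc b.val r, wnat n V t b.val) + G n V a.val r (b.val-1)) := by
      apply Finset.sup'_congr _ rfl
      intro r hr
      rw [Finset.mem_Icc] at hr
      congr 1
      · apply Finset.sum_congr rfl
        intro t ht
        rw [Finset.mem_Ioc] at ht
        apply wnat_agree hag (by have := a.isLt; omega) b.isLt
        rw [show min t b.val = b.val from by omega, show max t b.val = t from by omega]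
        exact Nat.add_lt_add_left (by omega) _
      · apply G_congr
        intro t c htr hta hcb
        have htn : t < n := lt_of_le_of_lt hta a.isLt
        apply wnat_agree hag htn (by have := b.isLt; omega)
        rw [show min t c = c from by omega, show max t c = t from by omega]
        exact lt_of_lt_of_le (mu_lt (by omega) htn) (Nat.le_add_right _ _)
    rw [hSU, hM1, hw, hdev] at hT
    have hMlt : (Finset.univ.filter (fun k : Fin n => k.val < b.val)).sup (TermF n V a b)
        ⊔ ↑(wnat n V b.val b.val + (Finset.Icc b.val (a.val-1)).sup'
            (Finset.nonempty_Icc.mpr (by omega))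
            (fun r => (∑ t ∈ Finset.Ioc b.val r, wnat n V t b.val) + G n V a.val r (b.val-1)))
        < (↑(V a b + SU n V a.val b.val) : WithBot ℝ) :=
      sup_lt_iff.mpr ⟨M1_lt hpV htV a b (le_of_lt hba),
        WithBot.coe_lt_coe.mpr (dev_lt hpV a b hba hb1)⟩
    rw [sup_eq_left.mpr (le_of_lt hMlt)] at hT
    have hfin := sup_cancel hT hMlt
    have := WithBot.coe_inj.mp hfin
    linarith
  · have hb0 : b.val = 0 := by omega
    rw [Tmat_split0 W a b hba hb0, Tmat_split0 V a b hba hb0, hSU] at hT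
    have := WithBot.coe_inj.mp hT
    linarith

lemma Tmat_diag_split {n : ℕ} (U : Matrix (Fin n) (Fin n) ℝ) (b : Fin n) :
    Tmat n U b b = ↑(U b b)
      ⊔ (Finset.univ.filter (fun k : Fin n => k.val < b.val)).sup (TermF n U b b) := by
  have hTb : TermF n U b b b = ↑(U b b) := by
    rw [TermF_b U b b le_rfl, G_of_ge _ le_rfl, zero_add, wnat_fin]
  rw [Tmat_formula']
  apply le_antisymm
  · apply Finset.sup_le
    intro k _
    rcases lt_trichotomy k.val b.val with h | h | h
    · exact le_sup_of_le_right (Finset.le_sup (Finset.mem_filter.mpr ⟨Finset.mem_univ k, h⟩))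
    · have hk : k = b := Fin.ext h
      subst hk
      rw [hTb]
      exact le_sup_left
    · rw [TermF_gt U b b k h]
      exact bot_le
  · apply sup_le
    · rw [← hTb]
      exact Finset.le_sup (Finset.mem_univ b)
    · exact Finset.sup_le fun k hk => Finset.le_sup (Finset.mem_univ k)

lemma uniq_diag {n : ℕ} {W V : Matrix (Fin n) (Fin n) ℝ}
    (hpV : StrictPara n V) (htV : StrictTrapeze n V) (b : Fin n)
    (hag : ∀ t c : Fin n, min t.val c.val * n + max t.val c.val < b.val * n + b.val → W t c = V t c)
    (hT : Tmat n W b b = Tmat n V b b) : W b b = V b b := by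
  rw [Tmat_diag_split, Tmat_diag_split] at hT
  have hM1 : (Finset.univ.filter (fun k : Fin n => k.val < b.val)).sup (TermF n W b b)
      = (Finset.univ.filter (fun k : Fin n => k.val < b.val)).sup (TermF n V b b) := by
    apply Finset.sup_congr rfl
    intro k hk
    rw [Finset.mem_filter] at hk
    exact TermF_congr hag hk.2 (Nat.le_add_right _ _)
  rw [hM1] at hT
  have hMlt : (Finset.univ.filter (fun k : Fin n => k.val < b.val)).sup (TermF n V b b)
      < ↑(V b b) := by
    have h := M1_lt hpV htV b b le_rfl
    unfold SU at h
    rw [Finset.Ico_self, Finset.sum_empty, add_zero] at h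
    exact h
  rw [sup_eq_left.mpr (le_of_lt hMlt)] at hT
  exact WithBot.coe_inj.mp (sup_cancel hT hMlt)

end TPtropAux
/-- a tropical totally positive matrix is the tropical transfer
matrix of the canonical planar network for a unique real weight matrix. -/
theorem TP_unique_weights (n : ℕ) (A : Matrix (Fin n) (Fin n) ℝ)
    (hA : IsTropTP n A) :
    ∃! W : Matrix (Fin n) (Fin n) ℝ, Tmat n W = A.map ((↑) : ℝ → WithBot ℝ) := by
  refine ⟨phi n A, TPtropAux.Tmat_phi hA, ?_⟩
  intro W hW
  have hpV := TPtropAux.phi_sPara hA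
  have htV := TPtropAux.phi_sTrap hA
  have hTV := TPtropAux.Tmat_phi hA
  have key : ∀ N : ℕ, ∀ i j : Fin n, min i.val j.val * n + max i.val j.val = N
      → W i j = phi n A i j := by
    intro N
    induction N using Nat.strong_induction_on with
    | _ N ih =>
      intro i j hN
      rcases lt_trichotomy j.val i.val with h | h | h
      · apply TPtropAux.uniq_off hpV htV i j h
        · intro t c hc
          apply ih (min t.val c.val * n + max t.val c.val) ?_ t c rfl
          rw [show min i.val j.val = j.val from by omega,
            show max i.val j.val = i.val from by omega] at hN
          exact lt_of_lt_of_eq hc hN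
        · rw [hW, hTV]
      · have hij : i = j := Fin.ext (by omega)
        subst hij
        apply TPtropAux.uniq_diag hpV htV i
        · intro t c hc
          apply ih (min t.val c.val * n + max t.val c.val) ?_ t c rfl
          rw [min_self, max_self] at hN
          exact lt_of_lt_of_eq hc hN
        · rw [hW, hTV]
      · have hmain := TPtropAux.uniq_off (W := W.transpose) (V := (phi n A).transpose)
          (TPtropAux.sPara_transpose hpV) (TPtropAux.sTrap_transpose htV) j i h
          ?agree ?ht
        · rwa [Matrix.transpose_apply, Matrix.transpose_apply] at hmain
        case agree =>
          intro t c hc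
          rw [Matrix.transpose_apply, Matrix.transpose_apply]
          apply ih (min c.val t.val * n + max c.val t.val) ?_ c t rfl
          rw [show min i.val j.val = i.val from by omega,
            show max i.val j.val = j.val from by omega] at hN
          rw [min_comm, max_comm]
          exact lt_of_lt_of_eq hc hN
        case ht =>
          rw [TPtropAux.Tmat_transpose, TPtropAux.Tmat_transpose, hW, hTV]
  funext i j
  exact key _ i j rfl
end

section
/- If an n×n real matrix A is tropical totally positive (A ∈ TPtrop) and W ∈ Matrix (Fin n) (Fin n) ℝ is any weight matrix with T(W) = A, then W satisfies the strict trapeze inequalities and the strict parallelogram inequalities. -/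
open Finset

namespace TPaux

open Finset

abbrev Mat (n : ℕ) := Matrix (Fin n) (Fin n) (WithBot ℝ)

lemma addsup (a b c : WithBot ℝ) : (a ⊔ b) + c = (a + c) ⊔ (b + c) := by
  rcases le_total a b with h | h
  · rw [sup_eq_right.2 h, sup_eq_right.2 (add_le_add_left h c)]
  · rw [sup_eq_left.2 h, sup_eq_left.2 (add_le_add_left h c)]

lemma supadd (a b c : WithBot ℝ) : c + (a ⊔ b) = (c + a) ⊔ (c + b) := by
  rw [add_comm, addsup, add_comm a c, add_comm b c]

lemma tropMul_apply {n : ℕ} (A B : Mat n) (i j : Fin n) :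
    tropMul A B i j = Finset.univ.sup fun k => A i k + B k j := rfl

lemma le_tropMul {n : ℕ} (A B : Mat n) (i j k : Fin n) :
    A i k + B k j ≤ tropMul A B i j :=
  Finset.le_sup (f := fun k => A i k + B k j) (Finset.mem_univ k)

lemma tropMul_le {n : ℕ} {A B : Mat n} {i j : Fin n} {x : WithBot ℝ}
    (h : ∀ k, A i k + B k j ≤ x) : tropMul A B i j ≤ x :=
  Finset.sup_le fun k _ => h k

lemma tropMul_xLow {n : ℕ} (M : Mat n) (a : ℕ) (s : ℝ) (ha : a + 1 < n) :
    tropMul M (xLow n a s) = fun i j =>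
      M i j ⊔ (if j.val = a then M i ⟨a + 1, ha⟩ + (s : WithBot ℝ) else ⊥) := by
  funext i j
  apply le_antisymm
  · apply tropMul_le
    intro k
    by_cases hkj : k = j
    · subst hkj
      refine le_sup_of_le_left ?_
      simp [xLow]
    · by_cases hk2 : k.val = a + 1 ∧ j.val = a
      · have : xLow n a s k j = (s : WithBot ℝ) := by
          simp [xLow, hkj, hk2]
        rw [this]
        have hk : k = ⟨a + 1, ha⟩ := Fin.ext hk2.1
        subst hk
        exact le_sup_of_le_right (by simp [hk2.2])
      · have : xLow n a s k j = ⊥ := by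
          simp only [xLow, if_neg hkj, if_neg hk2]
        simp [this]
  · apply sup_le
    · have := le_tropMul M (xLow n a s) i j j
      simpa [xLow] using this
    · split_ifs with hja
      · have := le_tropMul M (xLow n a s) i j ⟨a + 1, ha⟩
        have hne : (⟨a + 1, ha⟩ : Fin n) ≠ j := by
          intro h; apply absurd (congrArg Fin.val h); simp [hja]
        simpa [xLow, hne, hja] using this
      · exact bot_le

lemma tropMul_xDiag {n : ℕ} (M : Mat n) (a : ℕ) (s : ℝ) :
    tropMul M (xDiag n a s) = fun i j =>
      M i j + (if j.val = a then (s : WithBot ℝ) else 0) := by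
  funext i j
  apply le_antisymm
  · apply tropMul_le
    intro k
    by_cases hkj : k = j
    · subst hkj; simp [xDiag]
    · simp [xDiag, hkj]
  · have := le_tropMul M (xDiag n a s) i j j
    simpa [xDiag] using this

end TPaux
namespace TPaux

open Finset

variable {n : ℕ} (W : Matrix (Fin n) (Fin n) ℝ)

/-- Effect of one full block (diagonal `d = n-1-k`) on a matrix. -/
noncomputable def blockStep (k : ℕ) (M : Mat n) : Mat n := fun i j =>
  M i j ⊔ (if h : n - k - 2 ≤ j.val ∧ j.val + 1 ≤ n - 1 then
    M i ⟨j.val + 1, by omega⟩ +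
      ((W ⟨j.val + 1, by omega⟩ ⟨j.val + 1 - (n - 1 - k), by omega⟩ : ℝ) : WithBot ℝ)
  else ⊥)

/-- Partial products of blocks. -/
noncomputable def Q (W : Matrix (Fin n) (Fin n) ℝ) : ℕ → Mat n :=
  fun K => Nat.rec (tropId n) (fun K ih => blockStep W K ih) K

lemma Q_zero : Q W 0 = tropId n := rfl
lemma Q_succ (K : ℕ) : Q W (K + 1) = blockStep W K (Q W K) := rfl

/-- Partially applied block. -/
noncomputable def partialBlock (k t₀ : ℕ) (M : Mat n) : Mat n := fun i j =>
  M i j ⊔ (if h : n - k - 2 ≤ j.val ∧ j.val < n - k - 2 + t₀ ∧ j.val + 1 < n then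
    M i ⟨j.val + 1, h.2.2⟩ +
      ((W ⟨j.val + 1, h.2.2⟩ ⟨j.val + 1 - (n - 1 - k), by omega⟩ : ℝ) : WithBot ℝ)
  else ⊥)

lemma partialBlock_zero (k : ℕ) (M : Mat n) : partialBlock W k 0 M = M := by
  funext i j
  simp only [partialBlock]
  rw [dif_neg (by omega)]
  simp

lemma foldl_block (k : ℕ) (hk : k + 2 ≤ n) (M : Mat n) : ∀ t₀, t₀ ≤ k + 1 →
    (((List.range t₀).map fun t =>
      xLow n (n - k + t - 2) (wnat n W (n - k + t - 1) t)).foldl tropMul M)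
    = partialBlock W k t₀ M := by
  intro t₀
  induction t₀ with
  | zero => intro _; simp [partialBlock_zero]
  | succ t ih =>
    intro ht
    rw [List.range_succ, List.map_append, List.foldl_append, ih (by omega)]
    simp only [List.map_cons, List.map_nil, List.foldl_cons, List.foldl_nil]
    have ha : (n - k + t - 2) + 1 < n := by omega
    rw [tropMul_xLow _ _ _ ha]
    funext i j
    by_cases hja : j.val = n - k + t - 2
    · rw [if_pos hja]
      have h1 : partialBlock W k t M i j = M i j ⊔ ⊥ := by
        simp only [partialBlock]
        rw [dif_neg (by omega)]
      have h2 : partialBlock W k t M i ⟨n - k + t - 2 + 1, ha⟩ = M i ⟨n - k + t - 2 + 1, ha⟩ := by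
        simp only [partialBlock]
        rw [dif_neg (by simp; omega)]
        simp
      rw [h1, h2]
      have h3 : partialBlock W k (t+1) M i j =
          M i j ⊔ (M i ⟨j.val + 1, by omega⟩ +
            ((W ⟨j.val + 1, by omega⟩ ⟨j.val + 1 - (n - 1 - k), by omega⟩ : ℝ) : WithBot ℝ)) := by
        simp only [partialBlock]
        rw [dif_pos (by omega)]
      rw [h3]
      have hw : wnat n W (n - k + t - 1) t =
          W ⟨j.val + 1, by omega⟩ ⟨j.val + 1 - (n - 1 - k), by omega⟩ := by
        rw [wnat, dif_pos (by omega)]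
        congr 1 <;> apply Fin.ext <;> simp <;> omega
      have hj1 : (⟨n - k + t - 2 + 1, ha⟩ : Fin n) = ⟨j.val + 1, by omega⟩ := by
        apply Fin.ext; simp; omega
      rw [hw, hj1, sup_bot_eq]
    · rw [if_neg hja, sup_bot_eq]
      simp only [partialBlock]
      by_cases hc : n - k - 2 ≤ j.val ∧ j.val < n - k - 2 + t ∧ j.val + 1 < n
      · rw [dif_pos hc, dif_pos (by omega)]
      · rw [dif_neg hc, dif_neg (by omega)]

/-- The key reorganization: `Lmat` as iterated block steps. -/
lemma Lmat_eq_Q : Lmat n W = Q W (n - 1) := by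
  rw [Lmat]
  suffices h : ∀ m, m ≤ n - 1 →
      (((List.range m).flatMap fun k => (List.range (k + 1)).map fun t =>
        xLow n (n - k + t - 2) (wnat n W (n - k + t - 1) t)).foldl tropMul (tropId n))
      = Q W m from h (n-1) le_rfl
  intro m
  induction m with
  | zero => intro _; rfl
  | succ m ih =>
    intro hm
    rw [List.range_succ, List.flatMap_append, List.foldl_append, ih (by omega)]
    simp only [List.flatMap_cons, List.flatMap_nil, List.append_nil]
    rw [foldl_block W m (by omega) _ (m+1) le_rfl, Q_succ]
    funext i j
    simp only [blockStep, partialBlock]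
    by_cases hc : n - m - 2 ≤ j.val ∧ j.val + 1 ≤ n - 1
    · rw [dif_pos (by omega), dif_pos hc]
    · rw [dif_neg (by omega), dif_neg hc]

/-- Closed form of `Dmat`. -/
lemma Dmat_eq : Dmat n W = fun i j => if i = j then ((W j j : ℝ) : WithBot ℝ) else ⊥ := by
  rw [Dmat]
  suffices h : ∀ m, m ≤ n →
      (((List.range m).map fun i => xDiag n i (wnat n W i i)).foldl tropMul (tropId n))
      = fun i j => if i = j then (if j.val < m then ((W j j : ℝ) : WithBot ℝ) else 0) else ⊥ by
    rw [h n le_rfl]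
    funext i j
    by_cases hij : i = j
    · simp [hij, j.isLt]
    · simp [hij]
  intro m
  induction m with
  | zero => intro _; funext i j; simp [tropId]
  | succ m ih =>
    intro hm
    rw [List.range_succ, List.map_append, List.foldl_append, ih (by omega)]
    simp only [List.map_cons, List.map_nil, List.foldl_cons, List.foldl_nil]
    refine (tropMul_xDiag _ _ _).trans ?_
    funext i j
    by_cases hij : i = j
    · subst hij
      rw [if_pos rfl, if_pos rfl]
      by_cases hjm : i.val = m
      · have hw : wnat n W m m = W i i := by
          rw [wnat, dif_pos (by omega)]
          congr 1 <;> apply Fin.ext <;> simp [hjm]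
        rw [if_pos hjm, hw, if_neg (by omega), if_pos (by omega), zero_add]
      · rw [if_neg hjm]
        by_cases hlt : i.val < m
        · rw [if_pos hlt, if_pos (by omega), add_zero]
        · rw [if_neg hlt, if_neg (by omega), add_zero]
    · rw [if_neg hij, if_neg hij, WithBot.bot_add]

end TPaux
namespace TPaux

set_option maxHeartbeats 1000000

open Finset

variable {n : ℕ} (W : Matrix (Fin n) (Fin n) ℝ)

lemma sum_Icc_left (f : ℕ → ℝ) {a b : ℕ} (h : a ≤ b) :
    ∑ s ∈ Finset.Icc a b, f s = f a + ∑ s ∈ Finset.Icc (a+1) b, f s := by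
  have : Finset.Icc a b = insert a (Finset.Icc (a+1) b) := by
    ext x; simp only [Finset.mem_Icc, Finset.mem_insert]; omega
  rw [this, Finset.sum_insert (by simp only [Finset.mem_Icc]; omega)]

lemma sum_Icc_right (f : ℕ → ℝ) {a b : ℕ} (h : a ≤ b) (h1 : 1 ≤ b) :
    ∑ s ∈ Finset.Icc a b, f s = (∑ s ∈ Finset.Icc a (b-1), f s) + f b := by
  have : Finset.Icc a b = insert b (Finset.Icc a (b-1)) := by
    ext x; simp only [Finset.mem_Icc, Finset.mem_insert]; omega
  rw [this, Finset.sum_insert (by simp only [Finset.mem_Icc]; omega), add_comm]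

lemma Q_shape (K : ℕ) : ∀ i j : Fin n,
    (Q W K i i = 0) ∧ (i < j → Q W K i j = ⊥) := by
  induction K with
  | zero =>
    intro i j
    constructor
    · simp [Q_zero, tropId]
    · intro hij; simp [Q_zero, tropId, Fin.ne_of_lt hij]
  | succ K ih =>
    intro i j
    constructor
    · rw [Q_succ]
      simp only [blockStep]
      have hd : (if h : n - K - 2 ≤ i.val ∧ i.val + 1 ≤ n - 1 then
          Q W K i ⟨i.val + 1, by omega⟩ +
            ((W ⟨i.val + 1, by omega⟩ ⟨i.val + 1 - (n - 1 - K), by omega⟩ : ℝ) : WithBot ℝ)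
          else ⊥) = ⊥ := by
        split_ifs with h
        · rw [(ih i ⟨i.val + 1, by omega⟩).2 (by simp [Fin.lt_def]), WithBot.bot_add]
        · rfl
      rw [hd, (ih i j).1, sup_bot_eq]
    · intro hij
      rw [Q_succ]
      simp only [blockStep]
      have hd : (if h : n - K - 2 ≤ j.val ∧ j.val + 1 ≤ n - 1 then
          Q W K i ⟨j.val + 1, by omega⟩ +
            ((W ⟨j.val + 1, by omega⟩ ⟨j.val + 1 - (n - 1 - K), by omega⟩ : ℝ) : WithBot ℝ)
          else ⊥) = ⊥ := by
        split_ifs with h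
        · rw [(ih i ⟨j.val + 1, by omega⟩).2 (by simp [Fin.lt_def]; omega), WithBot.bot_add]
        · rfl
      rw [hd, (ih i j).2 hij, sup_bot_eq]

lemma Q_diag (K : ℕ) (i : Fin n) : Q W K i i = 0 := (Q_shape W K i i).1

lemma Q_upper (K : ℕ) {i j : Fin n} (h : i < j) : Q W K i j = ⊥ := (Q_shape W K i j).2 h

lemma Q_mono (K : ℕ) (i j : Fin n) : Q W K i j ≤ Q W (K+1) i j := by
  rw [Q_succ]; exact le_sup_left

lemma Q_bot (K : ℕ) : ∀ i j : Fin n, j < i → j.val + 1 + K < n → Q W K i j = ⊥ := by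
  induction K with
  | zero =>
    intro i j hji _
    simp [Q_zero, tropId, (Fin.ne_of_lt hji).symm]
  | succ K ih =>
    intro i j hji hK
    rw [Q_succ]
    simp only [blockStep]
    rw [ih i j hji (by omega), dif_neg (by omega), sup_bot_eq]

noncomputable def SupW (W : Matrix (Fin n) (Fin n) ℝ) (i b : ℕ) : WithBot ℝ :=
  (Finset.range b).sup fun c => ((wnat n W i c : ℝ) : WithBot ℝ)

lemma le_SupW {i c b : ℕ} (h : c < b) : ((wnat n W i c : ℝ) : WithBot ℝ) ≤ SupW W i b := by
  unfold SupW
  exact Finset.le_sup (f := fun c => ((wnat n W i c : ℝ) : WithBot ℝ)) (Finset.mem_range.2 h)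

lemma SupW_mono (i : ℕ) {b b' : ℕ} (h : b ≤ b') : SupW W i b ≤ SupW W i b' :=
  Finset.sup_mono (Finset.range_subset_range.2 h)

lemma SupW_le {i b : ℕ} {x : WithBot ℝ} (h : ∀ c < b, ((wnat n W i c : ℝ) : WithBot ℝ) ≤ x) :
    SupW W i b ≤ x :=
  Finset.sup_le fun c hc => h c (Finset.mem_range.1 hc)

lemma Q_LB : ∀ K, K ≤ n - 1 → ∀ (c : ℕ) (i j : Fin n), j ≤ i → c + n ≤ j.val + 1 + K →
    ((∑ s ∈ Finset.Icc (j.val+1) i.val, wnat n W s c : ℝ) : WithBot ℝ) ≤ Q W K i j := by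
  intro K
  induction K with
  | zero =>
    intro _ c i j hji hc
    have hij : i = j := by apply Fin.ext; have := i.isLt; have := j.isLt; omega
    subst hij
    rw [Finset.Icc_eq_empty (by omega), Finset.sum_empty]
    rw [Q_diag]
    exact le_rfl
  | succ K ih =>
    intro hKn c i j hji hc
    have hjn := j.isLt
    have hin := i.isLt
    by_cases h1 : c + n ≤ j.val + 1 + K
    · exact le_trans (ih (by omega) c i j hji h1) (Q_mono W K i j)
    · have hceq : c + n = j.val + 2 + K := by omega
      by_cases hij : i = j
      · subst hij
        rw [Finset.Icc_eq_empty (by omega), Finset.sum_empty, Q_diag]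
        exact le_rfl
      · have hji'' : j.val ≤ i.val := hji
        have hji' : j.val < i.val := lt_of_le_of_ne hji'' (fun h => hij (Fin.ext h.symm))
        rw [Q_succ]
        simp only [blockStep]
        refine le_trans ?_ le_sup_right
        have hcond : n - K - 2 ≤ j.val ∧ j.val + 1 ≤ n - 1 := by omega
        rw [dif_pos hcond]
        have hw : W (⟨j.val + 1, by omega⟩ : Fin n) ⟨j.val + 1 - (n - 1 - K), by omega⟩
            = wnat n W (j.val+1) c := by
          rw [wnat, dif_pos (by omega)]
          congr 2
          omega
        rw [hw]
        have hsplit := sum_Icc_left (fun s => wnat n W s c) (by omega : j.val + 1 ≤ i.val)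
        rw [hsplit, WithBot.coe_add, add_comm (Q W K i _) _]
        refine add_le_add le_rfl ?_
        exact ih (by omega) c i ⟨j.val+1, by omega⟩ (by rw [Fin.le_def]; simpa using hji')
          (by show c + n ≤ j.val + 1 + 1 + K; omega)

lemma Q_UB : ∀ K, K ≤ n - 1 → ∀ (i j : Fin n), j < i → n ≤ j.val + 1 + K →
    Q W K i j ≤ ((∑ s ∈ Finset.Icc (j.val+1) i.val, wnat n W s (j.val+1+K-n) : ℝ) : WithBot ℝ) ⊔
      (SupW W i.val (j.val+1+K-n) + Q W K ⟨i.val-1, by omega⟩ j) := by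
  intro K
  induction K with
  | zero =>
    intro _ i j hlt hK
    exact absurd hK (by have := j.isLt; have := i.isLt; omega)
  | succ K ih =>
    intro hKn i j hlt hK
    have hin : i.val < n := i.isLt
    have hjn : j.val < n := j.isLt
    have hji : j.val < i.val := hlt
    rw [Q_succ]
    simp only [blockStep]
    apply sup_le
    · -- old part
      by_cases h1 : n ≤ j.val + 1 + K
      · refine le_trans (ih (by omega) i j hlt h1) ?_
        apply sup_le
        · -- old top
          refine le_trans ?_ le_sup_right
          have hsplit := sum_Icc_right (fun s => wnat n W s (j.val+1+K-n))
            (by omega : j.val + 1 ≤ i.val) (by omega)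
          rw [hsplit, WithBot.coe_add, add_comm ((_ : ℝ) : WithBot ℝ) _]
          apply add_le_add
          · exact le_SupW W (by omega)
          · have := Q_LB W (K+1) (by omega) (j.val+1+K-n) ⟨i.val-1, by omega⟩ j
              (by rw [Fin.le_def]; simp; omega) (by omega)
            exact this
        · refine le_trans ?_ le_sup_right
          exact add_le_add (SupW_mono W i.val (by omega)) (Q_mono W K _ j)
      · rw [Q_bot W K i j hlt (by omega)]
        exact bot_le
    · -- new step
      split_ifs with h2
      · have hw : W (⟨j.val + 1, by omega⟩ : Fin n) ⟨j.val + 1 - (n - 1 - K), by omega⟩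
            = wnat n W (j.val+1) (j.val+1+(K+1)-n) := by
          rw [wnat, dif_pos (by omega)]
          congr 2
          omega
        rw [hw]
        by_cases hij1 : i.val = j.val + 1
        · have hfin : (⟨j.val + 1, by omega⟩ : Fin n) = i := by apply Fin.ext; simp; omega
          rw [hfin, Q_diag, zero_add]
          refine le_trans ?_ le_sup_left
          rw [show Finset.Icc (j.val+1) i.val = {j.val + 1} by rw [hij1]; exact Finset.Icc_self _]
          rw [Finset.sum_singleton]
        · have hlt'' : (⟨j.val+1, by omega⟩ : Fin n) < i := by
            rw [Fin.lt_def]; simp only [Fin.val_mk]; omega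
          have hthis := ih (by omega) i ⟨j.val+1, by omega⟩ hlt''
            (by show n ≤ j.val + 1 + 1 + K; omega)
          have hc₁' : (⟨j.val+1, by omega⟩ : Fin n).val + 1 + K - n = j.val+1+(K+1)-n := by
            show j.val + 1 + 1 + K - n = j.val+1+(K+1)-n; omega
          rw [hc₁'] at hthis
          refine le_trans (add_le_add_left hthis _) ?_
          rw [addsup]
          apply sup_le
          · refine le_trans ?_ le_sup_left
            have hsplit := sum_Icc_left (fun s => wnat n W s (j.val+1+(K+1)-n))
              (by omega : j.val + 1 ≤ i.val)
            rw [hsplit, WithBot.coe_add, add_comm ((wnat n W (j.val+1) _ : ℝ) : WithBot ℝ) _]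
          · refine le_trans ?_ le_sup_right
            rw [add_assoc]
            refine add_le_add_right ?_ _
            exact le_sup_right
      · exact bot_le

end TPaux
namespace TPaux

open Finset

variable {n : ℕ} (W : Matrix (Fin n) (Fin n) ℝ)

lemma L_diag (i : Fin n) : Lmat n W i i = 0 := by
  rw [Lmat_eq_Q]; exact Q_diag W _ i

lemma L_upper {i j : Fin n} (h : i < j) : Lmat n W i j = ⊥ := by
  rw [Lmat_eq_Q]; exact Q_upper W _ h

lemma L_LB {c : ℕ} {i j : Fin n} (hji : j ≤ i) (hc : c ≤ j.val) :
    ((∑ s ∈ Finset.Icc (j.val+1) i.val, wnat n W s c : ℝ) : WithBot ℝ) ≤ Lmat n W i j := by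
  rw [Lmat_eq_Q]
  exact Q_LB W (n-1) le_rfl c i j hji (by have := j.isLt; omega)

lemma L_UB {i j : Fin n} (hlt : j < i) :
    Lmat n W i j ≤ ((∑ s ∈ Finset.Icc (j.val+1) i.val, wnat n W s j.val : ℝ) : WithBot ℝ) ⊔
      (SupW W i.val j.val + Lmat n W ⟨i.val-1, by have := i.isLt; omega⟩ j) := by
  rw [Lmat_eq_Q]
  have hin := i.isLt
  have hjn := j.isLt
  have h := Q_UB W (n-1) le_rfl i j hlt (by omega)
  have hc : j.val + 1 + (n-1) - n = j.val := by omega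
  rw [hc] at h
  exact h

lemma L_step {i j : Fin n} (hlt : j < i) :
    Lmat n W i j ≤ SupW W i.val (j.val+1) +
      Lmat n W ⟨i.val-1, by have := i.isLt; omega⟩ j := by
  have hin := i.isLt
  have hji : j.val < i.val := hlt
  refine le_trans (L_UB W hlt) (sup_le ?_ ?_)
  · have hsplit := sum_Icc_right (fun s => wnat n W s j.val)
      (by omega : j.val + 1 ≤ i.val) (by omega)
    rw [hsplit, WithBot.coe_add, add_comm ((_ : ℝ) : WithBot ℝ) _]
    apply add_le_add
    · exact le_SupW W (by omega)
    · have hji2 : j ≤ (⟨i.val-1, by omega⟩ : Fin n) := by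
        rw [Fin.le_def]; show j.val ≤ i.val - 1; omega
      exact L_LB W (i := ⟨i.val-1, by omega⟩) hji2 le_rfl
  · exact add_le_add (SupW_mono W i.val (by omega)) le_rfl

lemma LD_apply (i k : Fin n) :
    tropMul (Lmat n W) (Dmat n W) i k = Lmat n W i k + ((W k k : ℝ) : WithBot ℝ) := by
  rw [Dmat_eq]
  apply le_antisymm
  · apply tropMul_le
    intro l
    by_cases hlk : l = k
    · subst hlk; rw [if_pos rfl]
    · rw [if_neg hlk, WithBot.add_bot]; exact bot_le
  · have h1 := le_tropMul (Lmat n W) (fun p q => if p = q then ((W q q : ℝ) : WithBot ℝ) else ⊥) i k k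
    have h2 : (if k = k then ((W k k : ℝ) : WithBot ℝ) else ⊥) = ((W k k : ℝ) : WithBot ℝ) :=
      if_pos rfl
    simp only [h2] at h1
    exact h1

lemma T_apply (i j : Fin n) :
    Tmat n W i j = Finset.univ.sup fun k =>
      Lmat n W i k + (((W k k : ℝ) : WithBot ℝ) + Lmat n W.transpose j k) := by
  rw [Tmat, tropMul_apply]
  apply Finset.sup_congr rfl
  intro k _
  rw [LD_apply, Matrix.transpose_apply, add_assoc]

lemma T_ge (i j k : Fin n) :
    Lmat n W i k + (((W k k : ℝ) : WithBot ℝ) + Lmat n W.transpose j k) ≤ Tmat n W i j := by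
  rw [T_apply]
  exact Finset.le_sup (f := fun k =>
    Lmat n W i k + (((W k k : ℝ) : WithBot ℝ) + Lmat n W.transpose j k)) (Finset.mem_univ k)

lemma T_le {i j : Fin n} {x : WithBot ℝ}
    (h : ∀ k, Lmat n W i k + (((W k k : ℝ) : WithBot ℝ) + Lmat n W.transpose j k) ≤ x) :
    Tmat n W i j ≤ x := by
  rw [T_apply]
  exact Finset.sup_le fun k _ => h k

lemma T_transpose (i j : Fin n) : Tmat n W.transpose j i = Tmat n W i j := by
  rw [T_apply, T_apply]
  apply Finset.sup_congr rfl
  intro k _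
  rw [Matrix.transpose_transpose, Matrix.transpose_apply]
  abel

end TPaux
namespace TPaux

open Finset

lemma perm2 : ∀ σ : Equiv.Perm (Fin 2), σ = 1 ∨ σ = Equiv.swap 0 1 := by decide

lemma tropPermSup_two_even (B : Matrix (Fin 2) (Fin 2) (WithBot ℝ)) :
    tropPermSup 2 1 B = B 0 0 + B 1 1 := by
  rw [tropPermSup]
  have hf : (Finset.univ.filter fun σ : Equiv.Perm (Fin 2) => Equiv.Perm.sign σ = 1)
      = {1} := by
    ext σ
    simp only [Finset.mem_filter, Finset.mem_univ, true_and, Finset.mem_singleton]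
    constructor
    · intro hs
      rcases perm2 σ with h | h
      · exact h
      · exfalso
        rw [h, Equiv.Perm.sign_swap (by decide)] at hs
        exact absurd hs (by decide)
    · intro h; rw [h]; simp
  rw [hf, Finset.sup_singleton]
  rw [Fin.sum_univ_two]
  rfl

lemma tropPermSup_two_odd (B : Matrix (Fin 2) (Fin 2) (WithBot ℝ)) :
    tropPermSup 2 (-1) B = B 0 1 + B 1 0 := by
  rw [tropPermSup]
  have hf : (Finset.univ.filter fun σ : Equiv.Perm (Fin 2) => Equiv.Perm.sign σ = -1)
      = {Equiv.swap 0 1} := by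
    ext σ
    simp only [Finset.mem_filter, Finset.mem_univ, true_and, Finset.mem_singleton]
    constructor
    · intro hs
      rcases perm2 σ with h | h
      · exfalso
        rw [h] at hs
        simp at hs
      · exact h
    · intro h; rw [h, Equiv.Perm.sign_swap (by decide)]
  rw [hf, Finset.sup_singleton]
  rw [Fin.sum_univ_two]
  rw [Equiv.swap_apply_left, Equiv.swap_apply_right]

lemma minor2 {n : ℕ} {A : Matrix (Fin n) (Fin n) ℝ} (hA : IsTropTP n A)
    {r0 r1 c0 c1 : Fin n} (hr : r0 < r1) (hc : c0 < c1) :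
    A r0 c1 + A r1 c0 < A r0 c0 + A r1 c1 := by
  have hrm : StrictMono ![r0, r1] := by
    intro a b hab
    fin_cases a <;> fin_cases b <;> first | exact absurd hab (by decide) | simpa using hr
  have hcm : StrictMono ![c0, c1] := by
    intro a b hab
    fin_cases a <;> fin_cases b <;> first | exact absurd hab (by decide) | simpa using hc
  have h := hA 2 le_rfl ![r0, r1] ![c0, c1] hrm hcm
  rw [tropPermSup_two_even, tropPermSup_two_odd] at h
  simp only [Matrix.submatrix_apply, Matrix.map_apply, Matrix.cons_val_zero,
    Matrix.cons_val_one, Matrix.head_cons] at h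
  rw [← WithBot.coe_add, ← WithBot.coe_add, WithBot.coe_lt_coe] at h
  exact h

end TPaux
namespace TPaux

open Finset

variable {n : ℕ} {W A : Matrix (Fin n) (Fin n) ℝ}

lemma wnat_eq (i j : Fin n) : wnat n W i.val j.val = W i j := by
  rw [wnat, dif_pos ⟨i.isLt, j.isLt⟩]

lemma sup_add_eq {γ : Type*} (s : Finset γ) (f : γ → WithBot ℝ) (x : WithBot ℝ) :
    s.sup f + x = s.sup fun c => f c + x := by
  classical
  induction s using Finset.induction_on with
  | empty => simp [WithBot.bot_add]
  | insert _ _ h ih => rw [Finset.sup_insert, Finset.sup_insert, addsup, ih]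

lemma SupW_add_lt {i b : ℕ} {x y : WithBot ℝ} (hy : ⊥ < y)
    (h : ∀ c < b, ((wnat n W i c : ℝ) : WithBot ℝ) + x < y) : SupW W i b + x < y := by
  rw [SupW, sup_add_eq]
  rw [Finset.sup_lt_iff hy]
  intro c hc
  exact h c (Finset.mem_range.1 hc)

section Phases

variable (hm : ∀ r0 r1 c0 c1 : Fin n, r0 < r1 → c0 < c1 →
    A r0 c1 + A r1 c0 < A r0 c0 + A r1 c1)
  (hT : ∀ i j : Fin n, Tmat n W i j = ((A i j : ℝ) : WithBot ℝ))

include hm hT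

lemma phase1 : ∀ i : Fin n, A i i = W i i := by
  suffices hs : ∀ m, ∀ i : Fin n, i.val = m → A i i = W i i from fun i => hs i.val i rfl
  intro m
  induction m using Nat.strong_induction_on with
  | _ m IH =>
  intro i him
  have hge : ((W i i : ℝ) : WithBot ℝ) ≤ ((A i i : ℝ) : WithBot ℝ) := by
    rw [← hT]
    have h2 := T_ge W i i i
    rw [L_diag, L_diag, zero_add, add_zero] at h2
    exact h2
  by_cases hi0 : i.val = 0
  · -- no lower corners
    have hle : ((A i i : ℝ) : WithBot ℝ) ≤ ((W i i : ℝ) : WithBot ℝ) := by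
      rw [← hT]
      apply T_le
      intro k
      rcases lt_trichotomy k i with hk | hk | hk
      · exact absurd hk (by rw [Fin.lt_def]; omega)
      · subst hk
        rw [L_diag, L_diag, zero_add, add_zero]
      · rw [L_upper W hk, WithBot.bot_add]
        exact bot_le
    exact_mod_cast le_antisymm hle hge
  · have hi1 : 1 ≤ i.val := by omega
    have hin := i.isLt
    set i' : Fin n := ⟨i.val - 1, by omega⟩ with hi'def
    have hii' : i' < i := by rw [Fin.lt_def]; show i.val - 1 < i.val; omega
    have hX : ∀ c < i.val,
        ((wnat n W i.val c : ℝ) : WithBot ℝ) + ((A i' i : ℝ) : WithBot ℝ)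
          < ((A i i : ℝ) : WithBot ℝ) := by
      intro c hc
      have hmin := hm i' i i' i hii' hii'
      have hAi' : A i' i' = W i' i' := IH (i.val - 1) (by omega) i' rfl
      have hlow : ((wnat n W i.val c + W i' i' : ℝ) : WithBot ℝ) ≤ ((A i i' : ℝ) : WithBot ℝ) := by
        rw [← hT]
        refine le_trans ?_ (T_ge W i i' i')
        rw [L_diag, add_zero]
        rw [WithBot.coe_add]
        refine add_le_add ?_ le_rfl
        have h3 := L_LB W (c := c) (i := i) (j := i') (le_of_lt hii')
          (by show c ≤ i.val - 1; omega)
        have hIcc : Finset.Icc (i'.val + 1) i.val = {i.val} := by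
          rw [show i'.val + 1 = i.val from by show i.val - 1 + 1 = i.val; omega, Finset.Icc_self]
        rw [hIcc, Finset.sum_singleton] at h3
        exact h3
      rw [WithBot.coe_le_coe] at hlow
      rw [← WithBot.coe_add, WithBot.coe_lt_coe]
      linarith
    have hle2 : ((A i i : ℝ) : WithBot ℝ) ≤ ((W i i : ℝ) : WithBot ℝ) ⊔
        (SupW W i.val i.val + ((A i' i : ℝ) : WithBot ℝ)) := by
      rw [← hT]
      apply T_le
      intro k
      rcases lt_trichotomy k i with hk | hk | hk
      · refine le_trans ?_ le_sup_right
        have h1 : Lmat n W i k ≤ SupW W i.val i.val + Lmat n W i' k :=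
          le_trans (L_step W hk)
            (add_le_add (SupW_mono W _ (by have : k.val < i.val := hk; omega)) le_rfl)
        calc Lmat n W i k + (((W k k : ℝ) : WithBot ℝ) + Lmat n W.transpose i k)
            ≤ (SupW W i.val i.val + Lmat n W i' k) +
              (((W k k : ℝ) : WithBot ℝ) + Lmat n W.transpose i k) := add_le_add_left h1 _
          _ = SupW W i.val i.val + (Lmat n W i' k +
              (((W k k : ℝ) : WithBot ℝ) + Lmat n W.transpose i k)) := add_assoc _ _ _
          _ ≤ SupW W i.val i.val + Tmat n W i' i := add_le_add_right (T_ge W i' i k) _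
          _ = SupW W i.val i.val + ((A i' i : ℝ) : WithBot ℝ) := by rw [hT]
      · subst hk
        rw [L_diag, L_diag, zero_add, add_zero]
        exact le_sup_left
      · rw [L_upper W hk, WithBot.bot_add]
        exact bot_le
    have hXlt : SupW W i.val i.val + ((A i' i : ℝ) : WithBot ℝ) < ((A i i : ℝ) : WithBot ℝ) :=
      SupW_add_lt (WithBot.bot_lt_coe _) hX
    rcases le_sup_iff.1 hle2 with h | h
    · exact_mod_cast le_antisymm h hge
    · exact absurd h (not_le.2 hXlt)

lemma phase2 : ∀ i j : Fin n, j ≤ i →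
    A i j = ∑ s ∈ Finset.Icc j.val i.val, wnat n W s j.val := by
  suffices hs : ∀ m, ∀ i j : Fin n, i.val = m → j ≤ i →
      A i j = ∑ s ∈ Finset.Icc j.val i.val, wnat n W s j.val from
    fun i j hji => hs i.val i j rfl hji
  intro m
  induction m using Nat.strong_induction_on with
  | _ m IH =>
  intro i j him hji
  have hin := i.isLt
  have hjn := j.isLt
  by_cases hij : j = i
  · subst hij
    rw [Finset.Icc_self, Finset.sum_singleton, wnat_eq]
    exact phase1 hm hT j
  · have hlt : j < i := lt_of_le_of_ne hji hij
    have hjilt : j.val < i.val := hlt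
    set i' : Fin n := ⟨i.val - 1, by omega⟩ with hi'def
    have hii' : i' < i := by rw [Fin.lt_def]; show i.val - 1 < i.val; omega
    have hji' : j ≤ i' := by rw [Fin.le_def]; show j.val ≤ i.val - 1; omega
    have hIH : A i' j = ∑ s ∈ Finset.Icc j.val (i.val - 1), wnat n W s j.val :=
      IH (i.val - 1) (by omega) i' j rfl hji'
    -- lower bound
    have hge : ((∑ s ∈ Finset.Icc j.val i.val, wnat n W s j.val : ℝ) : WithBot ℝ)
        ≤ ((A i j : ℝ) : WithBot ℝ) := by
      rw [← hT]
      refine le_trans ?_ (T_ge W i j j)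
      rw [L_diag, add_zero]
      rw [sum_Icc_left _ (le_of_lt hjilt), WithBot.coe_add, wnat_eq j j, add_comm]
      exact add_le_add (L_LB W (le_of_lt hlt) le_rfl) le_rfl
    -- strict dominators
    have hdom : ∀ c < j.val,
        ((wnat n W i.val c : ℝ) : WithBot ℝ) + ((A i' j : ℝ) : WithBot ℝ)
          < ((A i j : ℝ) : WithBot ℝ) := by
      intro c hc
      have hcn : c < n := by omega
      set cF : Fin n := ⟨c, hcn⟩ with hcFdef
      have hcj : cF < j := by rw [Fin.lt_def]; exact hc
      have hmin := hm i' i cF j hii' hcj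
      have hIHc : A i' cF = ∑ s ∈ Finset.Icc c (i.val - 1), wnat n W s c :=
        IH (i.val - 1) (by omega) i' cF rfl
          (by rw [Fin.le_def]; show c ≤ i.val - 1; omega)
      have hlowc : ((∑ s ∈ Finset.Icc c i.val, wnat n W s c : ℝ) : WithBot ℝ)
          ≤ ((A i cF : ℝ) : WithBot ℝ) := by
        rw [← hT]
        refine le_trans ?_ (T_ge W i cF cF)
        rw [L_diag, add_zero]
        rw [sum_Icc_left _ (by omega : c ≤ i.val), WithBot.coe_add, wnat_eq cF cF, add_comm]
        exact add_le_add (L_LB W (le_of_lt (lt_trans hcj hlt)) le_rfl) le_rfl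
      rw [WithBot.coe_le_coe] at hlowc
      rw [← WithBot.coe_add, WithBot.coe_lt_coe]
      have hsplit : ∑ s ∈ Finset.Icc c i.val, wnat n W s c
          = (∑ s ∈ Finset.Icc c (i.val - 1), wnat n W s c) + wnat n W i.val c :=
        sum_Icc_right _ (by omega) (by omega)
      rw [hsplit] at hlowc
      rw [hIH]
      rw [hIHc] at hmin
      linarith [hmin, hlowc, hIH]
    -- upper bound
    have hle2 : ((A i j : ℝ) : WithBot ℝ) ≤
        ((∑ s ∈ Finset.Icc j.val i.val, wnat n W s j.val : ℝ) : WithBot ℝ) ⊔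
        (SupW W i.val j.val + ((A i' j : ℝ) : WithBot ℝ)) := by
      rw [← hT]
      apply T_le
      intro k
      rcases lt_trichotomy k j with hk | hk | hk
      · -- k < j
        refine le_trans ?_ le_sup_right
        have h1 : Lmat n W i k ≤ SupW W i.val j.val + Lmat n W i' k :=
          le_trans (L_step W (lt_trans hk hlt))
            (add_le_add (SupW_mono W _ (by have : k.val < j.val := hk; omega)) le_rfl)
        calc Lmat n W i k + (((W k k : ℝ) : WithBot ℝ) + Lmat n W.transpose j k)
            ≤ (SupW W i.val j.val + Lmat n W i' k) +
              (((W k k : ℝ) : WithBot ℝ) + Lmat n W.transpose j k) := add_le_add_left h1 _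
          _ = SupW W i.val j.val + (Lmat n W i' k +
              (((W k k : ℝ) : WithBot ℝ) + Lmat n W.transpose j k)) := add_assoc _ _ _
          _ ≤ SupW W i.val j.val + Tmat n W i' j := add_le_add_right (T_ge W i' j k) _
          _ = SupW W i.val j.val + ((A i' j : ℝ) : WithBot ℝ) := by rw [hT]
      · rw [hk]
        rw [L_diag, add_zero]
        have h4 := L_UB W hlt
        refine le_trans (add_le_add_left h4 _) ?_
        rw [addsup]
        apply sup_le
        · refine le_trans ?_ le_sup_left
          rw [sum_Icc_left (fun s => wnat n W s j.val) (le_of_lt hjilt), WithBot.coe_add,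
            wnat_eq j j, add_comm]
        · refine le_trans ?_ le_sup_right
          rw [add_assoc]
          refine add_le_add_right ?_ _
          have h5 := T_ge W i' j j
          rw [L_diag, add_zero] at h5
          rw [hT] at h5
          exact h5
      · -- j < k
        rw [L_upper W.transpose hk, WithBot.add_bot, WithBot.add_bot]
        exact bot_le
    have hXlt : SupW W i.val j.val + ((A i' j : ℝ) : WithBot ℝ) < ((A i j : ℝ) : WithBot ℝ) :=
      SupW_add_lt (WithBot.bot_lt_coe _) hdom
    rcases le_sup_iff.1 hle2 with h | h
    · exact_mod_cast le_antisymm h hge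
    · exact absurd h (not_le.2 hXlt)

end Phases

end TPaux
namespace TPaux

lemma wnat_transpose {n : ℕ} (W : Matrix (Fin n) (Fin n) ℝ) (a b : ℕ) :
    wnat n W.transpose a b = wnat n W b a := by
  rw [wnat, wnat]
  by_cases h : a < n ∧ b < n
  · rw [dif_pos h, dif_pos ⟨h.2, h.1⟩]
    rfl
  · rw [dif_neg h, dif_neg (fun hh => h ⟨hh.2, hh.1⟩)]

end TPaux

/-- any weight matrix representing a tropical totally positive
matrix satisfies the strict trapeze and parallelogram inequalities. -/
theorem weights_of_TP_strict_ineqs (n : ℕ) (A W : Matrix (Fin n) (Fin n) ℝ)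
    (hA : IsTropTP n A) (hW : Tmat n W = A.map ((↑) : ℝ → WithBot ℝ)) :
    StrictTrapeze n W ∧ StrictPara n W := by
  have hT : ∀ i j : Fin n, Tmat n W i j = ((A i j : ℝ) : WithBot ℝ) := by
    intro i j; rw [hW]; rfl
  have hm : ∀ r0 r1 c0 c1 : Fin n, r0 < r1 → c0 < c1 →
      A r0 c1 + A r1 c0 < A r0 c0 + A r1 c1 :=
    fun r0 r1 c0 c1 hr hc => TPaux.minor2 hA hr hc
  have hTt : ∀ i j : Fin n, Tmat n W.transpose i j = ((A.transpose i j : ℝ) : WithBot ℝ) := by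
    intro i j
    rw [TPaux.T_transpose W j i, hT j i, Matrix.transpose_apply]
  have hmt : ∀ r0 r1 c0 c1 : Fin n, r0 < r1 → c0 < c1 →
      A.transpose r0 c1 + A.transpose r1 c0 < A.transpose r0 c0 + A.transpose r1 c1 := by
    intro r0 r1 c0 c1 hr hc
    simp only [Matrix.transpose_apply]
    have := hm c0 c1 r0 r1 hc hr
    linarith
  have hbelow := TPaux.phase2 hm hT
  have habove := TPaux.phase2 hmt hTt
  constructor
  · -- strict trapeze
    intro i hi
    have hin := i.isLt
    have hfv : (fpred i).val = i.val - 1 := rfl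
    have hii' : fpred i < i := by rw [Fin.lt_def, hfv]; omega
    have h1 : A i i = W i i := TPaux.phase1 hm hT i
    have h2 : A (fpred i) (fpred i) = W (fpred i) (fpred i) := TPaux.phase1 hm hT _
    have h3 : A i (fpred i) = W (fpred i) (fpred i) + W i (fpred i) := by
      rw [hbelow i (fpred i) (le_of_lt hii')]
      rw [TPaux.sum_Icc_left (fun s => wnat n W s (fpred i).val)
        (show (fpred i).val ≤ i.val by omega)]
      rw [show (fpred i).val + 1 = i.val from by rw [hfv]; omega]
      rw [Finset.Icc_self, Finset.sum_singleton]
      rw [TPaux.wnat_eq (fpred i) (fpred i), TPaux.wnat_eq i (fpred i)]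
    have h4 : A (fpred i) i = W (fpred i) (fpred i) + W (fpred i) i := by
      have h5 := habove i (fpred i) (le_of_lt hii')
      rw [Matrix.transpose_apply] at h5
      rw [h5]
      rw [TPaux.sum_Icc_left (fun s => wnat n W.transpose s (fpred i).val)
        (show (fpred i).val ≤ i.val by omega)]
      rw [show (fpred i).val + 1 = i.val from by rw [hfv]; omega]
      rw [Finset.Icc_self, Finset.sum_singleton]
      rw [TPaux.wnat_transpose, TPaux.wnat_transpose]
      rw [TPaux.wnat_eq (fpred i) (fpred i), TPaux.wnat_eq (fpred i) i]
    have hmin := hm (fpred i) i (fpred i) i hii' hii'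
    rw [h1, h2, h3, h4] at hmin
    linarith
  · -- strict parallelogram
    intro i j hij
    have hin := i.isLt
    have hjn := j.isLt
    set iP : Fin n := ⟨i.val - 1, by omega⟩ with hiPdef
    set jS : Fin n := ⟨j.val + 1, by omega⟩ with hjSdef
    have hval1 : iP.val = i.val - 1 := rfl
    have hval2 : jS.val = j.val + 1 := rfl
    have hii' : iP < i := by rw [Fin.lt_def, hval1]; omega
    have hjj1 : j < jS := by rw [Fin.lt_def, hval2]; omega
    have hjle : j ≤ i := by rw [Fin.le_def]; omega
    constructor
    · have e1 : A i j = (∑ s ∈ Finset.Icc j.val (i.val-1), wnat n W s j.val)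
          + wnat n W i.val j.val := by
        rw [hbelow i j hjle, TPaux.sum_Icc_right _ (by omega) (by omega)]
      have e2 : A iP j = ∑ s ∈ Finset.Icc j.val (i.val-1), wnat n W s j.val := by
        rw [hbelow iP j (by rw [Fin.le_def, hval1]; omega), hval1]
      have e3 : A i jS = (∑ s ∈ Finset.Icc (j.val+1) (i.val-1), wnat n W s (j.val+1))
          + wnat n W i.val (j.val+1) := by
        rw [hbelow i jS (by rw [Fin.le_def, hval2]; omega), hval2,
          TPaux.sum_Icc_right _ (by omega) (by omega)]
      have e4 : A iP jS = ∑ s ∈ Finset.Icc (j.val+1) (i.val-1), wnat n W s (j.val+1) := by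
        rw [hbelow iP jS (by rw [Fin.le_def, hval1, hval2]; omega), hval1, hval2]
      have hmin := hm iP i j jS hii' hjj1
      rw [e1, e2, e3, e4] at hmin
      have hfin : wnat n W i.val j.val < wnat n W i.val (j.val+1) := by linarith
      have hres : W i j < W i jS := by
        rw [← TPaux.wnat_eq (W := W) i j, ← TPaux.wnat_eq (W := W) i jS]
        exact hfin
      exact hres
    · have f1 : A j i = (∑ s ∈ Finset.Icc j.val (i.val-1), wnat n W.transpose s j.val)
          + wnat n W.transpose i.val j.val := by
        have h5 := habove i j hjle
        rw [Matrix.transpose_apply] at h5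
        rw [h5, TPaux.sum_Icc_right _ (by omega) (by omega)]
      have f2 : A j iP = ∑ s ∈ Finset.Icc j.val (i.val-1), wnat n W.transpose s j.val := by
        have h5 := habove iP j (by rw [Fin.le_def, hval1]; omega)
        rw [Matrix.transpose_apply] at h5
        rw [h5, hval1]
      have f3 : A jS i = (∑ s ∈ Finset.Icc (j.val+1) (i.val-1), wnat n W.transpose s (j.val+1))
          + wnat n W.transpose i.val (j.val+1) := by
        have h5 := habove i jS (by rw [Fin.le_def, hval2]; omega)
        rw [Matrix.transpose_apply] at h5
        rw [h5, hval2, TPaux.sum_Icc_right _ (by omega) (by omega)]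
      have f4 : A jS iP = ∑ s ∈ Finset.Icc (j.val+1) (i.val-1),
          wnat n W.transpose s (j.val+1) := by
        have h5 := habove iP jS (by rw [Fin.le_def, hval1, hval2]; omega)
        rw [Matrix.transpose_apply] at h5
        rw [h5, hval1, hval2]
      have hminT := hm j jS iP i hjj1 hii'
      rw [f1, f2, f3, f4] at hminT
      have hfin : wnat n W.transpose i.val j.val < wnat n W.transpose i.val (j.val+1) := by
        linarith
      rw [TPaux.wnat_transpose, TPaux.wnat_transpose] at hfin
      have hres : W j i < W jS i := by
        rw [← TPaux.wnat_eq (W := W) j i, ← TPaux.wnat_eq (W := W) jS i]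
        exact hfin
      exact hres
end
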